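/- arXiv:1608.06059 — 8 statements merged into one kernel-verified Lean document; each statement's English description precedes it below -/
import Mathlib

section
/- For every integer i, the integer n′_i is not divisible by p. -/
/-- Lemma 3.8 ("n'_i is a unit"): for every integer `i`, the integer `n'_i` is not
divisible by `p`. Here `n'` and `t` are characterized by: if `a (i-1) ≠ p` then
`n' i = n (i-1)` and `t i = i - 1`; if `a (i-1) = p` then, `j` being the greatest
integer less than `i` with `a (j-1) ≠ p - 1`, we have `n' i = n (j-1) - (p^f - 1)`
and `t i = j - 1`. -/
theorem stmt_0 (p f : ℕ) (hp : p.Prime) (hf : 1 ≤ f)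
    (a : ℤ → ℤ) (ha_per : ∀ i : ℤ, a (i + f) = a i)
    (ha_lb : ∀ i : ℤ, 1 ≤ a i) (ha_ub : ∀ i : ℤ, a i ≤ p)
    (ha_ne : ∃ i : ℤ, a i ≠ p)
    (n : ℤ → ℤ)
    (hn : ∀ i : ℤ, n i = ∑ j ∈ Finset.range f, a (i + j + 1) * (p : ℤ) ^ (f - 1 - j))
    (n' t : ℤ → ℤ)
    (hn't₁ : ∀ i : ℤ, a (i - 1) ≠ p → n' i = n (i - 1) ∧ t i = i - 1)
    (hn't₂ : ∀ i : ℤ, a (i - 1) = p → ∃ j : ℤ, j < i ∧ a (j - 1) ≠ p - 1 ∧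
      (∀ k : ℤ, j < k → k < i → a (k - 1) = p - 1) ∧
      n' i = n (j - 1) - ((p : ℤ) ^ f - 1) ∧ t i = j - 1) :
    ∀ i : ℤ, ¬ (p : ℤ) ∣ n' i := by
  have hp2 : (2 : ℤ) ≤ (p : ℤ) := by exact_mod_cast hp.two_le
  have key : ∀ i : ℤ, (p : ℤ) ∣ n i - a i := by
    intro i
    obtain ⟨m, rfl⟩ : ∃ m, f = m + 1 := ⟨f - 1, by omega⟩
    rw [hn, Finset.sum_range_succ]
    have h1 : a (i + (m : ℤ) + 1) = a i := by
      have := ha_per i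
      rw [show (i + (m : ℤ) + 1) = i + ((m + 1 : ℕ) : ℤ) by push_cast; ring]
      exact this
    have h2 : m + 1 - 1 - m = 0 := by omega
    rw [h1, h2, pow_zero, mul_one, add_sub_cancel_right]
    apply Finset.dvd_sum
    intro j hj
    have hj' : j < m := Finset.mem_range.mp hj
    exact Dvd.dvd.mul_left (dvd_pow_self (p : ℤ) (by omega)) _
  intro i hd
  by_cases h : a (i - 1) = p
  · obtain ⟨j, hji, hja, _, hn'i, _⟩ := hn't₂ i h
    rw [hn'i] at hd
    have h1 : (p : ℤ) ∣ (p : ℤ) ^ f := dvd_pow_self _ (by omega)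
    have h2 : (p : ℤ) ∣ a (j - 1) + 1 := by
      have := key (j - 1)
      have : (p : ℤ) ∣ (n (j - 1) - ((p : ℤ) ^ f - 1)) - (n (j - 1) - a (j - 1)) + (p : ℤ) ^ f := by
        exact dvd_add (dvd_sub hd this) h1
      convert this using 1; ring
    obtain ⟨c, hc⟩ := h2
    have hb1 := ha_lb (j - 1)
    have hb2 := ha_ub (j - 1)
    have hc1 : 1 ≤ c := by nlinarith
    have hc2 : c ≤ 1 := by nlinarith
    have hc0 : c = 1 := by omega
    rw [hc0, mul_one] at hc
    exact hja (by omega)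
  · obtain ⟨hn'i, _⟩ := hn't₁ i h
    rw [hn'i] at hd
    have h2 : (p : ℤ) ∣ a (i - 1) := by
      have := key (i - 1)
      have := dvd_sub hd this
      simpa using this
    have := Int.le_of_dvd (by have := ha_lb (i - 1); omega) h2
    have := ha_ub (i - 1)
    omega
end

section
/- Let i ∈ J and let m be the p-adic valuation of ξ_i (well defined since ξ_i > 0). Then m ≥ 1. If m ≥ 2, then ξ_i = p^m · (n_{i−m} − (p^f − 1)). If m = 1, then ξ_i = p · n_{i−1} in case ξ_i/p ≥ (p^f − 1)/(p − 1), and ξ_i = p · (n_{i−1} − (p^f − 1)) otherwise. -/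
/-- Periodicity extended to arbitrary integer multiples, for propositions. -/
lemma aux_perP (f : ℕ) (g : ℤ → Prop) (h : ∀ x : ℤ, g x ↔ g (x + f)) :
    ∀ (x k : ℤ), g (x + k * f) ↔ g x := by
  intro x k
  induction k using Int.induction_on with
  | zero => simp
  | succ k ih =>
      rw [show x + ((k : ℤ) + 1) * f = (x + k * f) + f by ring]
      exact (h _).symm.trans ih
  | pred k ih =>
      rw [show x + (-(k : ℤ) - 1) * f = (x + (-(k:ℤ)) * f) - f by ring]
      have := h ((x + (-(k:ℤ)) * f) - f)
      rw [sub_add_cancel] at this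
      exact this.trans ih

lemma aux_perP_dvd (f : ℕ) (g : ℤ → Prop) (h : ∀ x : ℤ, g x ↔ g (x + f))
    (x y : ℤ) (hxy : (f : ℤ) ∣ y - x) (hf : 1 ≤ f) : (g y ↔ g x) := by
  obtain ⟨k, hk⟩ := hxy
  have : y = x + k * f := by rw [mul_comm]; omega
  rw [this]
  exact aux_perP f g h x k

lemma aux_perF (f : ℕ) (c : ℤ → ℤ) (h : ∀ x : ℤ, c (x + f) = c x) :
    ∀ (x k : ℤ), c (x + k * f) = c x := by
  intro x k
  have := aux_perP f (fun z => c z = c x) (fun z => by show c z = c x ↔ c (z + f) = c x; rw [h z]) x k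
  simpa using this

lemma aux_perF_dvd (f : ℕ) (c : ℤ → ℤ) (h : ∀ x : ℤ, c (x + f) = c x)
    (x y : ℤ) (hxy : (f : ℤ) ∣ y - x) : c y = c x := by
  obtain ⟨k, hk⟩ := hxy
  have : y = x + k * f := by rw [mul_comm]; omega
  rw [this]
  exact aux_perF f c h x k

/-- Reindexing of the digit sum. -/
lemma aux_conv (p f : ℕ) (hf : 1 ≤ f) (c : ℤ → ℤ) (h : ∀ x : ℤ, c (x + f) = c x) (l : ℤ) :
    ∑ j ∈ Finset.range f, c (l + j + 1) * (p : ℤ) ^ (f - 1 - j)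
      = ∑ k ∈ Finset.range f, c (l - k) * (p : ℤ) ^ k := by
  rw [← Finset.sum_range_reflect (fun j => c (l + j + 1) * (p : ℤ) ^ (f - 1 - j)) f]
  apply Finset.sum_congr rfl
  intro j hj
  have hjf : j < f := Finset.mem_range.mp hj
  have h1 : f - 1 - (f - 1 - j) = j := by omega
  have h2 : ((f - 1 - j : ℕ) : ℤ) = (f : ℤ) - 1 - j := by
    have : j ≤ f - 1 := by omega
    push_cast [Nat.sub_sub]; omega
  rw [h1, h2]
  have h3 : l + ((f:ℤ) - 1 - j) + 1 = (l - j) + f := by ring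
  rw [h3, h (l - (j:ℤ))]

lemma aux_shift (p f : ℕ) (hf : 1 ≤ f) (c : ℤ → ℤ) (h : ∀ x : ℤ, c (x + f) = c x) (l : ℤ) :
    (p : ℤ) * ∑ k ∈ Finset.range f, c (l - 1 - k) * (p : ℤ) ^ k
      = (∑ k ∈ Finset.range f, c (l - k) * (p : ℤ) ^ k) + c l * ((p : ℤ) ^ f - 1) := by
  obtain ⟨F, rfl⟩ : ∃ F, f = F + 1 := ⟨f - 1, by omega⟩
  have hcl : c (l - 1 - F) = c l := by
    have := h (l - 1 - F)
    push_cast at this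
    rw [show l - 1 - (F:ℤ) + ((F:ℤ)+1) = l by ring] at this
    exact this.symm
  rw [Finset.mul_sum, Finset.sum_range_succ, Finset.sum_range_succ']
  simp only [pow_zero, mul_one, Nat.cast_add, Nat.cast_one, Nat.cast_zero, sub_zero]
  rw [hcl]
  have : ∀ k ∈ Finset.range F, (p:ℤ) * (c (l - 1 - k) * (p:ℤ)^k) = c (l - (k+1)) * (p:ℤ)^(k+1) := by
    intro k hk
    rw [show l - ((k:ℤ)+1) = l - 1 - k by ring]
    ring
  rw [Finset.sum_congr rfl this, pow_succ]
  have e2 : (p:ℤ) * (c l * (p:ℤ)^F) = c l + c l * ((p:ℤ)^F * p - 1) := by ring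
  linarith

lemma aux_M (p : ℕ) (hp2 : 2 ≤ (p:ℤ)) (r : ℤ → ℤ)
    (hr_lb : ∀ i : ℤ, 1 ≤ r i) (hr_ub : ∀ i : ℤ, r i ≤ p) (J : Set ℤ)
    (hmax₁ : ∀ i j : ℤ, j < i → r j = 1 → (∀ k : ℤ, j < k → k < i → r k = p - 1) →
      r i = p → (∀ k : ℤ, j < k → k ≤ i → k ∉ J) → j ∉ J)
    (i : ℤ) (hi : i ∈ J) :
    ∀ t : ℕ, (∀ x : ℕ, 1 ≤ x → x ≤ t → ((i + x : ℤ)) ∉ J) →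
      1 ≤ r i * (p:ℤ)^t - ∑ x ∈ Finset.range t, r (i + t - x) * (p:ℤ)^x := by
  set M : ℕ → ℤ := fun t => r i * (p:ℤ)^t - ∑ x ∈ Finset.range t, r (i + t - x) * (p:ℤ)^x with hM
  have hrec : ∀ t : ℕ, M (t+1) = p * M t - r (i + (t+1)) := by
    intro t
    simp only [hM]
    rw [Finset.sum_range_succ']
    push_cast
    simp only [sub_zero, pow_zero, mul_one]
    have : ∀ x ∈ Finset.range t,
        r (i + ((t:ℤ) + 1) - ((x:ℤ) + 1)) * (p:ℤ)^(x+1) = (r (i + (t:ℤ) - (x:ℤ)) * (p:ℤ)^x) * p := by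
      intro x hx
      rw [show i + ((t:ℤ)+1) - ((x:ℤ)+1) = i + (t:ℤ) - (x:ℤ) by ring]
      ring
    rw [Finset.sum_congr rfl this, ← Finset.sum_mul]
    ring
  suffices H : ∀ t : ℕ, (∀ x : ℕ, 1 ≤ x → x ≤ t → ((i + x : ℤ)) ∉ J) →
      (2 ≤ M t ∨ (M t = 1 ∧ r i = 1 ∧ ∀ x : ℕ, 1 ≤ x → x ≤ t → r (i + x) = (p:ℤ) - 1)) by
    intro t ht
    have := H t ht
    simp only [hM] at this
    omega
  intro t
  induction t with
  | zero =>
      intro _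
      simp only [hM, Finset.range_zero, Finset.sum_empty, pow_zero, mul_one, sub_zero]
      rcases eq_or_lt_of_le (hr_lb i) with h | h
      · right; exact ⟨h.symm, h.symm, fun x hx1 hx2 => by omega⟩
      · left; omega
  | succ t ih =>
      intro hchain
      have hchain' : ∀ x : ℕ, 1 ≤ x → x ≤ t → ((i + x : ℤ)) ∉ J :=
        fun x h1 h2 => hchain x h1 (by omega)
      rcases ih hchain' with h2 | ⟨h1, hri, hvals⟩
      · left
        have hu := hr_ub (i + ((t:ℤ)+1))
        have hr' := hrec t
        have hmul : (p:ℤ) * 2 ≤ (p:ℤ) * M t :=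
          mul_le_mul_of_nonneg_left h2 (by linarith)
        linarith
      · -- M t = 1, dangerous chain
        have hub := hr_ub (i + ((t:ℤ)+1))
        have hlb := hr_lb (i + ((t:ℤ)+1))
        have hne : r (i + ((t:ℤ)+1)) ≠ (p:ℤ) := by
          intro htop
          apply hmax₁ (i + ((t:ℤ)+1)) i (by omega) hri
          · intro k hk1 hk2
            have hx1 : 1 ≤ (k - i).toNat := by omega
            have hx2 : (k - i).toNat ≤ t := by omega
            have : k = i + ((k - i).toNat : ℤ) := by omega
            rw [this]; exact hvals _ hx1 hx2
          · exact htop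
          · intro k hk1 hk2
            have hx1 : 1 ≤ (k - i).toNat := by omega
            have hx2 : (k - i).toNat ≤ t + 1 := by omega
            have : k = i + ((k - i).toNat : ℤ) := by omega
            rw [this]
            exact hchain _ hx1 hx2
          · exact hi
        have hrec' := hrec t
        have hcast : (((t+1 : ℕ)) : ℤ) = (t:ℤ) + 1 := by push_cast; ring
        rcases eq_or_lt_of_le (by omega : r (i + ((t:ℤ)+1)) ≤ (p:ℤ) - 1) with he | hlt
        · right
          refine ⟨by rw [hrec', h1, he]; ring, hri, ?_⟩
          intro x hx1 hx2
          rcases Nat.lt_or_ge x (t+1) with hx | hx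
          · exact hvals x hx1 (by omega)
          · have : x = t + 1 := by omega
            subst this
            rw [hcast]
            exact he
        · left; rw [hrec', h1]; linarith

lemma aux_geo (p : ℕ) (hp2 : 2 ≤ (p:ℤ)) (N : ℕ) :
    ∑ k ∈ Finset.range N, (p:ℤ)^k ≤ (p:ℤ)^N - 1 := by
  have h := mul_geom_sum (p:ℤ) N
  have hnn : (0:ℤ) ≤ ∑ k ∈ Finset.range N, (p:ℤ)^k :=
    Finset.sum_nonneg fun k _ => pow_nonneg (by linarith) k
  nlinarith

open scoped Classical

lemma aux_pos (p f : ℕ) (hp2 : 2 ≤ (p:ℤ)) (hf : 1 ≤ f)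
    (r : ℤ → ℤ) (hr_per : ∀ i : ℤ, r (i + f) = r i)
    (hr_lb : ∀ i : ℤ, 1 ≤ r i) (hr_ub : ∀ i : ℤ, r i ≤ p)
    (J : Set ℤ) (hJ_per : ∀ i : ℤ, i ∈ J ↔ i + f ∈ J)
    (hmax₁ : ∀ i j : ℤ, j < i → r j = 1 → (∀ k : ℤ, j < k → k < i → r k = p - 1) →
      r i = p → (∀ k : ℤ, j < k → k ≤ i → k ∉ J) → j ∉ J)
    (i : ℤ) (hi : i ∈ J) :
    0 < (∑ k ∈ Finset.range f, (if (i - k : ℤ) ∈ J then (1:ℤ) else -1) * r (i - k) * (p:ℤ)^k)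
        + r i * ((p:ℤ)^f - 1) := by
  have hmemf : ∀ y : ℤ, (y - f ∈ J ↔ y ∈ J) := by
    intro y
    have := hJ_per (y - f)
    rw [show y - (f:ℤ) + f = y by ring] at this
    exact this
  have hrf : ∀ y : ℤ, r (y - f) = r y := by
    intro y
    have := hr_per (y - f)
    rw [show y - (f:ℤ) + f = y by ring] at this
    exact this.symm
  -- the first return to J above i
  have hex : ∃ x : ℕ, 1 ≤ x ∧ x ≤ f ∧ ((i + x : ℤ)) ∈ J := by
    refine ⟨f, hf, le_refl f, ?_⟩
    exact (hJ_per i).mp hi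
  classical
  let s := Nat.find hex
  obtain ⟨hs1, hsf, hsJ⟩ : 1 ≤ s ∧ s ≤ f ∧ ((i + s : ℤ)) ∈ J := Nat.find_spec hex
  have hmin : ∀ x : ℕ, 1 ≤ x → x < s → ((i + x : ℤ)) ∉ J := by
    intro x h1 h2 hxJ
    exact Nat.find_min hex h2 ⟨h1, by omega, hxJ⟩
  -- key lower bound on the "digit" part
  have hM := aux_M p hp2 r hr_lb hr_ub J hmax₁ i hi (s - 1)
    (fun x h1 h2 => hmin x h1 (by omega))
  set S : ℤ := ∑ x ∈ Finset.range (s-1), r (i + (s-1 : ℕ) - x) * (p:ℤ)^x with hS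
  -- split the sum
  have hsplit : Finset.range f = Finset.Ico 0 (f - s + 1) ∪ Finset.Ico (f - s + 1) f := by
    rw [Finset.range_eq_Ico, ← Finset.Ico_union_Ico_eq_Ico (by omega : 0 ≤ f - s + 1) (by omega : f - s + 1 ≤ f)]
  set term : ℕ → ℤ := fun k => (if (i - k : ℤ) ∈ J then (1:ℤ) else -1) * r (i - k) * (p:ℤ)^k with hterm
  have hsum : ∑ k ∈ Finset.range f, term k
      = (∑ k ∈ Finset.range (f - s + 1), term k) + ∑ k ∈ Finset.Ico (f - s + 1) f, term k := by
    rw [hsplit, Finset.sum_union]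
    · rw [Finset.range_eq_Ico]
    · exact Finset.Ico_disjoint_Ico_consecutive 0 (f - s + 1) f
  -- prefix identification
  have hpre : ∑ k ∈ Finset.Ico (f - s + 1) f, term k = -((p:ℤ)^(f - s + 1) * S) := by
    rw [Finset.sum_Ico_eq_sum_range]
    have hcard : f - (f - s + 1) = s - 1 := by omega
    rw [hcard]
    have e : ∀ x ∈ Finset.range (s-1), term (f - s + 1 + x)
        = -((p:ℤ)^(f-s+1) * (r (i + ((s-1:ℕ):ℤ) - (x:ℕ)) * (p:ℤ)^x)) := by
      intro x hx
      have hxlt : x < s - 1 := Finset.mem_range.mp hx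
      have hpos : (i : ℤ) - ((f - s + 1 + x : ℕ) : ℤ) = (i + ((s-1:ℕ):ℤ) - (x:ℕ)) - f := by
        push_cast
        omega
      have hnotJ : (i : ℤ) - ((f - s + 1 + x : ℕ) : ℤ) ∉ J := by
        rw [hpos, hmemf]
        have : (i + ((s-1:ℕ):ℤ) - (x:ℕ)) = i + ((s-1-x : ℕ) : ℤ) := by push_cast; omega
        rw [this]
        exact hmin (s-1-x) (by omega) (by omega)
      have hrv : r ((i:ℤ) - ((f - s + 1 + x : ℕ):ℤ)) = r (i + ((s-1:ℕ):ℤ) - (x:ℕ)) := by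
        rw [hpos, hrf]
      rw [hterm]
      simp only [if_neg hnotJ, hrv]
      rw [show (p:ℤ)^(f - s + 1 + x) = (p:ℤ)^(f-s+1) * (p:ℤ)^x from pow_add _ _ _]
      ring
    rw [Finset.sum_congr rfl e, Finset.sum_neg_distrib, hS, Finset.mul_sum]
  -- lower bound for the low part
  have hlow : (p:ℤ)^(f - s) - ((p:ℤ)^(f-s+1) - p) ≤ ∑ k ∈ Finset.range (f - s + 1), term k := by
    rw [Finset.sum_range_succ]
    have htop : (p:ℤ)^(f-s) ≤ term (f - s) := by
      rw [hterm]
      have hpos2 : (i:ℤ) - ((f - s : ℕ):ℤ) = (i + s) - f := by push_cast; omega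
      have hJ2 : (i:ℤ) - ((f-s : ℕ):ℤ) ∈ J := by rw [hpos2, hmemf]; exact hsJ
      simp only [if_pos hJ2, one_mul]
      have : 1 ≤ r ((i:ℤ) - ((f-s:ℕ):ℤ)) := hr_lb _
      nlinarith [pow_nonneg (by linarith : (0:ℤ) ≤ p) (f - s)]
    have hrest : -((p:ℤ)^(f-s+1) - p) ≤ ∑ k ∈ Finset.range (f - s), term k := by
      have h1 : ∀ k ∈ Finset.range (f - s), -((p:ℤ)^(k+1)) ≤ term k := by
        intro k hk
        rw [hterm]
        have hpk : (0:ℤ) ≤ (p:ℤ)^k := pow_nonneg (by linarith) k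
        have hub := hr_ub ((i:ℤ) - k)
        have hlb := hr_lb ((i:ℤ) - k)
        by_cases hJk : ((i:ℤ) - k) ∈ J
        · simp only [if_pos hJk, one_mul]
          nlinarith [pow_nonneg (by linarith : (0:ℤ) ≤ (p:ℤ)) (k+1)]
        · simp only [if_neg hJk]
          have : -((1:ℤ)) * r ((i:ℤ)-k) * (p:ℤ)^k = -(r ((i:ℤ)-k) * (p:ℤ)^k) := by ring
          rw [this]
          have : r ((i:ℤ)-k) * (p:ℤ)^k ≤ (p:ℤ) * (p:ℤ)^k := by nlinarith
          have hps : (p:ℤ) * (p:ℤ)^k = (p:ℤ)^(k+1) := by rw [pow_succ]; ring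
          linarith [this, hps ▸ this]
      have h2 := Finset.sum_le_sum h1
      have h3 : ∑ k ∈ Finset.range (f - s), -((p:ℤ)^(k+1)) = -((p:ℤ) * ∑ k ∈ Finset.range (f-s), (p:ℤ)^k) := by
        rw [Finset.mul_sum, ← Finset.sum_neg_distrib]
        apply Finset.sum_congr rfl
        intro k hk
        rw [pow_succ]
        ring
      have h4 := aux_geo p hp2 (f - s)
      have h5 : (p:ℤ) * ∑ k ∈ Finset.range (f-s), (p:ℤ)^k ≤ (p:ℤ) * ((p:ℤ)^(f-s) - 1) :=
        mul_le_mul_of_nonneg_left h4 (by linarith)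
      have h6 : (p:ℤ) * ((p:ℤ)^(f-s) - 1) = (p:ℤ)^(f-s+1) - p := by rw [pow_succ]; ring
      linarith
    linarith
  -- combine
  have hcomb : (∑ k ∈ Finset.range f, term k) + r i * ((p:ℤ)^f - 1)
      = (∑ k ∈ Finset.range (f - s + 1), term k) + ((p:ℤ)^(f-s+1) * (r i * (p:ℤ)^(s-1) - S) - r i) := by
    rw [hsum, hpre]
    have hpf : (p:ℤ)^(f-s+1) * (p:ℤ)^(s-1) = (p:ℤ)^f := by
      rw [← pow_add]
      congr 1
      omega
    linear_combination (-(r i)) * hpf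
  have hMS : 1 ≤ r i * (p:ℤ)^(s-1) - S := hM
  have hexp1 : (1:ℤ) ≤ (p:ℤ)^(f-s) := one_le_pow₀ (by linarith)
  have hexp2 : (p:ℤ)^(f-s+1) ≤ (p:ℤ)^(f-s+1) * (r i * (p:ℤ)^(s-1) - S) :=
    le_mul_of_one_le_right (pow_nonneg (by linarith) _) hMS
  have hrub := hr_ub i
  rw [hcomb]
  linarith

set_option maxHeartbeats 1000000 in
open scoped Classical in
/-- Lemma 3.12 ("xi_i in terms of n_l"): if `i ∈ J` and `m = v_p(ξ_i)`, then `m ≥ 1`;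
if `m ≥ 2` then `ξ_i = p^m (n_{i-m} - (p^f - 1))`; and if `m = 1` then `ξ_i = p n_{i-1}`
in case `ξ_i / p ≥ (p^f - 1)/(p - 1)` (the latter written as `∑_{j<f} p^j`), and
`ξ_i = p (n_{i-1} - (p^f - 1))` otherwise. -/
theorem stmt_3 (p f : ℕ) (hp : p.Prime) (hf : 1 ≤ f)
    (r : ℤ → ℤ) (hr_per : ∀ i : ℤ, r (i + f) = r i)
    (hr_lb : ∀ i : ℤ, 1 ≤ r i) (hr_ub : ∀ i : ℤ, r i ≤ p)
    (J : Set ℤ) (hJ_per : ∀ i : ℤ, i ∈ J ↔ i + f ∈ J)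
    (xi : ℤ → ℤ)
    (hxi : ∀ i : ℤ, xi i =
      (∑ j ∈ Finset.range f,
        (if (i + j + 1 : ℤ) ∈ J then (1 : ℤ) else -1) * r (i + j + 1) * (p : ℤ) ^ (f - 1 - j))
      + (if i ∈ J then r i * ((p : ℤ) ^ f - 1) else 0))
    (hmax₁ : ∀ i j : ℤ, j < i → r j = 1 → (∀ k : ℤ, j < k → k < i → r k = p - 1) →
      r i = p → (∀ k : ℤ, j < k → k ≤ i → k ∉ J) → j ∉ J)
    (hmax₂ : ((∀ i : ℤ, r i = p - 1) ∨ (p = 2 ∧ ∀ i : ℤ, r i = 2)) → J.Nonempty)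
    (hJ_ne_univ : (∀ i : ℤ, r i = p) → J ≠ Set.univ)
    (a : ℤ → ℤ) (ha_per : ∀ i : ℤ, a (i + f) = a i)
    (ha_lb : ∀ i : ℤ, 1 ≤ a i) (ha_ub : ∀ i : ℤ, a i ≤ p)
    (ha_ne : ∃ i : ℤ, a i ≠ p)
    (n : ℤ → ℤ)
    (hn : ∀ i : ℤ, n i = ∑ j ∈ Finset.range f, a (i + j + 1) * (p : ℤ) ^ (f - 1 - j))
    (hcong : ∀ i : ℤ, ((p : ℤ) ^ f - 1) ∣ (xi i - n i))
    (i : ℤ) (hi : i ∈ J)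
    (m : ℕ) (hm : (p : ℤ) ^ m ∣ xi i ∧ ¬ (p : ℤ) ^ (m + 1) ∣ xi i) :
    1 ≤ m ∧
    (2 ≤ m → xi i = (p : ℤ) ^ m * (n (i - m) - ((p : ℤ) ^ f - 1))) ∧
    (m = 1 →
      ((∑ j ∈ Finset.range f, (p : ℤ) ^ j) ≤ xi i / p → xi i = (p : ℤ) * n (i - 1)) ∧
      (xi i / p < ∑ j ∈ Finset.range f, (p : ℤ) ^ j →
        xi i = (p : ℤ) * (n (i - 1) - ((p : ℤ) ^ f - 1)))) := by
  have hp2 : (2:ℤ) ≤ (p:ℤ) := by exact_mod_cast hp.two_le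
  set Q : ℤ := ∑ j ∈ Finset.range f, (p:ℤ)^j with hQdef
  set D : ℤ := (p:ℤ)^f - 1 with hDdef
  have hDQ : ((p:ℤ) - 1) * Q = D := mul_geom_sum (p:ℤ) f
  have hQ1 : (1:ℤ) ≤ Q := by
    have h0 : (0:ℕ) ∈ Finset.range f := Finset.mem_range.mpr (by omega)
    have := Finset.single_le_sum (f := fun j => (p:ℤ)^j)
      (fun j _ => pow_nonneg (by linarith) j) h0
    simpa using this
  have hD0 : (0:ℤ) < D := by nlinarith
  -- periodic coefficient function
  have hc_per : ∀ x : ℤ, (fun x => (if x ∈ J then (1:ℤ) else -1) * r x) (x + f)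
      = (fun x => (if x ∈ J then (1:ℤ) else -1) * r x) x := by
    intro x
    simp only
    rw [hr_per]
    congr 1
    exact if_congr (hJ_per x).symm rfl rfl
  -- xi in "k-form"
  have hxik : xi i = (∑ k ∈ Finset.range f,
      (if (i - k : ℤ) ∈ J then (1:ℤ) else -1) * r (i - k) * (p:ℤ)^k) + r i * ((p:ℤ)^f - 1) := by
    rw [hxi i, if_pos hi]
    congr 1
    have := aux_conv p f hf (fun x => (if x ∈ J then (1:ℤ) else -1) * r x) hc_per i
    simpa using this
  -- n in "k-form"
  have hnk : ∀ l : ℤ, n l = ∑ k ∈ Finset.range f, a (l - k) * (p:ℤ)^k := by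
    intro l
    rw [hn l]
    exact aux_conv p f hf a ha_per l
  -- positivity
  have hpos : 0 < xi i := by
    rw [hxik]
    exact aux_pos p f hp2 hf r hr_per hr_lb hr_ub J hJ_per hmax₁ i hi
  -- upper bound
  have hub : xi i < (p:ℤ) * ((p:ℤ) * Q) := by
    rw [hxik]
    have hsumlt : (∑ k ∈ Finset.range f,
        (if (i - k : ℤ) ∈ J then (1:ℤ) else -1) * r (i - k) * (p:ℤ)^k) < (p:ℤ) * Q := by
      by_cases hall : ∀ x : ℤ, r x = (p:ℤ) ∧ x ∈ J
      · exact absurd (Set.eq_univ_iff_forall.mpr fun x => (hall x).2)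
          (hJ_ne_univ fun x => (hall x).1)
      · push_neg at hall
        obtain ⟨x₀, hx₀⟩ := hall
        set k₀ : ℕ := ((i - x₀) % f).toNat with hk₀def
        have hf0 : (0:ℤ) < (f:ℤ) := by exact_mod_cast hf
        have hmod1 : 0 ≤ (i - x₀) % f := Int.emod_nonneg _ (by omega)
        have hmod2 : (i - x₀) % f < f := Int.emod_lt_of_pos _ hf0
        have hk₀cast : (k₀ : ℤ) = (i - x₀) % f := Int.toNat_of_nonneg hmod1
        have hk₀f : k₀ < f := by omega
        have hdvd : (f:ℤ) ∣ (i - (k₀:ℤ)) - x₀ := by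
          have := Int.mul_ediv_add_emod (i - x₀) f
          refine ⟨(i - x₀) / f, by omega⟩
        have hrv : r (i - (k₀:ℤ)) = r x₀ := aux_perF_dvd f r hr_per x₀ _ hdvd
        have hJv : ((i - (k₀:ℤ)) ∈ J ↔ x₀ ∈ J) :=
          aux_perP_dvd f (fun z => z ∈ J) hJ_per x₀ _ hdvd hf
        have hlt := Finset.sum_lt_sum
          (f := fun k : ℕ => (if (i - k : ℤ) ∈ J then (1:ℤ) else -1) * r (i - k) * (p:ℤ)^k)
          (g := fun k : ℕ => (p:ℤ) * (p:ℤ)^k) (s := Finset.range f)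
          ?_ ?_
        · calc (∑ k ∈ Finset.range f,
              (if (i - k : ℤ) ∈ J then (1:ℤ) else -1) * r (i - k) * (p:ℤ)^k)
              < ∑ k ∈ Finset.range f, (p:ℤ) * (p:ℤ)^k := hlt
            _ = (p:ℤ) * Q := by rw [hQdef, Finset.mul_sum]
        · intro k hk
          have hpk : (0:ℤ) ≤ (p:ℤ)^k := pow_nonneg (by linarith) k
          have hub' := hr_ub ((i:ℤ) - k)
          have hlb' := hr_lb ((i:ℤ) - k)
          by_cases hJk : ((i:ℤ) - k) ∈ J
          · simp only [if_pos hJk, one_mul]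
            exact mul_le_mul_of_nonneg_right hub' hpk
          · simp only [if_neg hJk]
            nlinarith
        · refine ⟨k₀, Finset.mem_range.mpr hk₀f, ?_⟩
          have hpk : (0:ℤ) < (p:ℤ)^k₀ := pow_pos (by linarith) k₀
          by_cases hJk : ((i:ℤ) - k₀) ∈ J
          · have hrne : r x₀ ≠ (p:ℤ) := fun h => (hx₀ h) (hJv.mp hJk)
            have : r (i - (k₀:ℤ)) ≤ (p:ℤ) - 1 := by
              have := hr_ub (i - (k₀:ℤ))
              rw [hrv] at this ⊢
              rcases lt_or_eq_of_le this with h | h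
              · omega
              · exact absurd h hrne
            simp only [if_pos hJk, one_mul]
            nlinarith
          · simp only [if_neg hJk]
            have := hr_lb (i - (k₀:ℤ))
            nlinarith
    have hriD : r i * ((p:ℤ)^f - 1) ≤ (p:ℤ) * D := by
      rw [← hDdef]
      exact mul_le_mul_of_nonneg_right (hr_ub i) hD0.le
    have hpd : (p:ℤ) * D = (p:ℤ) * ((p:ℤ) * Q) - (p:ℤ) * Q := by
      rw [← hDQ]
      ring
    linarith
  -- bounds on n
  have hnlb : ∀ l : ℤ, Q ≤ n l := by
    intro l
    rw [hnk l, hQdef]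
    apply Finset.sum_le_sum
    intro k hk
    exact le_mul_of_one_le_left (pow_nonneg (by linarith) k) (ha_lb _)
  have hnub : ∀ l : ℤ, n l ≤ (p:ℤ) * Q - 1 := by
    intro l
    rw [hnk l]
    obtain ⟨x₀, hx₀⟩ := ha_ne
    set k₀ : ℕ := ((l - x₀) % f).toNat with hk₀def
    have hf0 : (0:ℤ) < (f:ℤ) := by exact_mod_cast hf
    have hmod1 : 0 ≤ (l - x₀) % f := Int.emod_nonneg _ (by omega)
    have hmod2 : (l - x₀) % f < f := Int.emod_lt_of_pos _ hf0
    have hk₀cast : (k₀ : ℤ) = (l - x₀) % f := Int.toNat_of_nonneg hmod1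
    have hk₀f : k₀ < f := by omega
    have hdvd : (f:ℤ) ∣ (l - (k₀:ℤ)) - x₀ := by
      have := Int.mul_ediv_add_emod (l - x₀) f
      refine ⟨(l - x₀) / f, by omega⟩
    have hav : a (l - (k₀:ℤ)) = a x₀ := aux_perF_dvd f a ha_per x₀ _ hdvd
    have hlt := Finset.sum_lt_sum
      (f := fun k : ℕ => a (l - k) * (p:ℤ)^k)
      (g := fun k : ℕ => (p:ℤ) * (p:ℤ)^k) (s := Finset.range f)
      ?_ ?_
    · have heq : ∑ k ∈ Finset.range f, (p:ℤ) * (p:ℤ)^k = (p:ℤ) * Q := by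
        rw [hQdef, Finset.mul_sum]
      omega
    · intro k hk
      exact mul_le_mul_of_nonneg_right (ha_ub _) (pow_nonneg (by linarith) k)
    · refine ⟨k₀, Finset.mem_range.mpr hk₀f, ?_⟩
      have hpk : (0:ℤ) < (p:ℤ)^k₀ := pow_pos (by linarith) k₀
      have hle : a (l - (k₀:ℤ)) ≤ (p:ℤ) - 1 := by
        have h1 := ha_ub (l - (k₀:ℤ))
        rw [hav] at h1 ⊢
        rcases lt_or_eq_of_le h1 with h | h
        · omega
        · exact absurd h hx₀
      show a (l - (k₀:ℤ)) * (p:ℤ)^k₀ < (p:ℤ) * (p:ℤ)^k₀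
      nlinarith [mul_le_mul_of_nonneg_right hle hpk.le]
  -- shift identity and congruence chain
  have hshift : ∀ l : ℤ, (p:ℤ) * n (l - 1) = n l + a l * D := by
    intro l
    rw [hnk (l-1), hnk l, hDdef]
    exact aux_shift p f hf a ha_per l
  have hchain : ∀ M : ℕ, D ∣ (p:ℤ)^M * n (i - M) - n i := by
    intro M
    induction M with
    | zero => simp
    | succ M ih =>
        have key : (p:ℤ)^(M+1) * n (i - (M+1 : ℕ)) - n i
            = (p:ℤ)^M * (a (i - M) * D) + ((p:ℤ)^M * n (i - M) - n i) := by
          have e1 : (i : ℤ) - ((M+1 : ℕ) : ℤ) = (i - (M:ℕ)) - 1 := by push_cast; ring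
          rw [e1]
          have := hshift (i - (M:ℕ))
          calc (p:ℤ)^(M+1) * n ((i - (M:ℕ)) - 1) - n i
              = (p:ℤ)^M * ((p:ℤ) * n ((i - (M:ℕ)) - 1)) - n i := by ring
            _ = (p:ℤ)^M * (n (i - (M:ℕ)) + a (i - (M:ℕ)) * D) - n i := by rw [this]
            _ = (p:ℤ)^M * (a (i - (M:ℕ)) * D) + ((p:ℤ)^M * n (i - (M:ℕ)) - n i) := by ring
        rw [key]
        exact dvd_add (Dvd.dvd.mul_left (dvd_mul_left D (a (i - (M:ℕ)))) _) ih
  have hcong' : ∀ M : ℕ, D ∣ (p:ℤ)^M * n (i - M) - xi i := by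
    intro M
    have h1 := hchain M
    have h2 := hcong i
    have : (p:ℤ)^M * n (i - M) - xi i = ((p:ℤ)^M * n (i - M) - n i) - (xi i - n i) := by ring
    rw [this]
    exact dvd_sub h1 h2
  -- coprimality
  have hcopD : ∀ M : ℕ, IsCoprime D ((p:ℤ)^M) := by
    intro M
    have hbase : IsCoprime ((p:ℤ)) D := by
      refine ⟨(p:ℤ)^(f-1), -1, ?_⟩
      have : (p:ℤ)^(f-1) * p = (p:ℤ)^f := by
        rw [← pow_succ]
        congr 1
        omega
      rw [hDdef]
      linarith [this]
    exact ((hbase.pow_left).symm : IsCoprime D ((p:ℤ)^M))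
  -- p divides xi i
  have hdvd_p : (p:ℤ) ∣ xi i := by
    obtain ⟨F, hFf⟩ : ∃ F, f = F + 1 := ⟨f - 1, by omega⟩
    rw [hxik]
    have hsplit2 : (∑ k ∈ Finset.range f,
        (if (i - k : ℤ) ∈ J then (1:ℤ) else -1) * r (i - k) * (p:ℤ)^k)
        = (∑ k ∈ Finset.range F,
            (if (i - (k+1:ℕ) : ℤ) ∈ J then (1:ℤ) else -1) * r (i - (k+1:ℕ)) * (p:ℤ)^(k+1))
          + (if (i - (0:ℕ) : ℤ) ∈ J then (1:ℤ) else -1) * r (i - (0:ℕ)) * (p:ℤ)^(0:ℕ) := by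
      rw [hFf, Finset.sum_range_succ']
    rw [hsplit2]
    have h0 : (if (i - (0:ℕ) : ℤ) ∈ J then (1:ℤ) else -1) * r (i - (0:ℕ)) * (p:ℤ)^(0:ℕ) = r i := by
      simp only [Nat.cast_zero, sub_zero, pow_zero, mul_one, if_pos hi, one_mul]
    rw [h0]
    have hgrp : (∑ k ∈ Finset.range F,
        (if (i - (k+1:ℕ) : ℤ) ∈ J then (1:ℤ) else -1) * r (i - (k+1:ℕ)) * (p:ℤ)^(k+1))
        + r i + r i * ((p:ℤ)^f - 1)
        = (∑ k ∈ Finset.range F,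
            (if (i - (k+1:ℕ) : ℤ) ∈ J then (1:ℤ) else -1) * r (i - (k+1:ℕ)) * (p:ℤ)^(k+1))
          + r i * (p:ℤ)^f := by ring
    rw [hgrp]
    apply dvd_add
    · apply Finset.dvd_sum
      intro k hk
      exact Dvd.dvd.mul_left (dvd_pow_self (p:ℤ) (Nat.succ_ne_zero k)) _
    · exact Dvd.dvd.mul_left (dvd_pow_self (p:ℤ) (by omega : f ≠ 0)) _
  have hm1 : 1 ≤ m := by
    by_contra h
    have hm0 : m = 0 := by omega
    apply hm.2
    rw [hm0]
    simpa using hdvd_p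
  refine ⟨hm1, ?_, ?_⟩
  · -- case m ≥ 2
    intro hm2
    obtain ⟨u, hu⟩ := hm.1
    have hpm0 : (0:ℤ) < (p:ℤ)^m := pow_pos (by linarith) m
    have hu1 : 1 ≤ u := by nlinarith
    have huQ : u < Q := by
      have h1 : (p:ℤ)^m * u < (p:ℤ) * ((p:ℤ) * Q) := by rw [← hu]; exact hub
      have h2 : (p:ℤ) * ((p:ℤ) * Q) ≤ (p:ℤ)^m * Q := by
        have : (p:ℤ)^2 ≤ (p:ℤ)^m := pow_le_pow_right₀ (by linarith) hm2
        nlinarith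
      have := lt_of_lt_of_le h1 h2
      exact lt_of_mul_lt_mul_left this (le_of_lt hpm0)
    have hdvdw : D ∣ (n (i - m) - u) := by
      have h1 := hcong' m
      rw [hu] at h1
      have : (p:ℤ)^m * n (i - m) - (p:ℤ)^m * u = (p:ℤ)^m * (n (i - m) - u) := by ring
      rw [this] at h1
      exact (hcopD m).dvd_of_dvd_mul_left h1
    obtain ⟨c, hc⟩ := hdvdw
    have hnl := hnlb (i - m)
    have hnu := hnub (i - m)
    have hcpos : 0 < c := by
      by_contra h
      push_neg at h
      nlinarith
    have hclt : c < 2 := by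
      by_contra h
      push_neg at h
      nlinarith
    have hc1 : c = 1 := by omega
    rw [hc1, mul_one] at hc
    rw [hu]
    congr 1
    omega
  · -- case m = 1
    intro hmeq
    have hdvd1 : (p:ℤ) ∣ xi i := hdvd_p
    obtain ⟨u, hu⟩ := hdvd1
    have hdiveq : xi i / p = u := by
      rw [hu]
      exact Int.mul_ediv_cancel_left u (by linarith)
    have hp0 : (0:ℤ) < (p:ℤ) := by linarith
    have hu1 : 1 ≤ u := by nlinarith
    have hupQ : u < (p:ℤ) * Q := by
      have h1 : (p:ℤ) * u < (p:ℤ) * ((p:ℤ) * Q) := by rw [← hu]; exact hub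
      exact lt_of_mul_lt_mul_left h1 (le_of_lt hp0)
    have hdvdw : D ∣ (n (i - 1) - u) := by
      have h1 := hcong' 1
      rw [hu] at h1
      have e1 : (p:ℤ)^(1:ℕ) * n (i - ((1:ℕ):ℤ)) - (p:ℤ) * u = (p:ℤ) * (n (i - 1) - u) := by
        push_cast
        ring
      rw [e1] at h1
      exact (hcopD 1).dvd_of_dvd_mul_left (by rw [pow_one]; exact h1)
    have hnl := hnlb (i - 1)
    have hnu := hnub (i - 1)
    constructor
    · intro hQu
      rw [hdiveq] at hQu
      have hw0 : n (i - 1) - u = 0 := by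
        apply Int.eq_zero_of_abs_lt_dvd hdvdw
        rw [abs_lt]
        constructor
        · nlinarith
        · nlinarith
      rw [hu]
      congr 1
      omega
    · intro hQu
      rw [hdiveq] at hQu
      obtain ⟨c, hc⟩ := hdvdw
      have hcpos : 0 < c := by
        by_contra h
        push_neg at h
        have h2 : D * c ≤ D * 0 := mul_le_mul_of_nonneg_left h hD0.le
        simp only [mul_zero] at h2
        linarith
      have hclt : c < 2 := by
        by_contra h
        push_neg at h
        have h2 : D * 2 ≤ D * c := mul_le_mul_of_nonneg_left h hD0.le
        have h3 : (0:ℤ) ≤ ((p:ℤ)-2) * Q := mul_nonneg (by linarith) (by linarith)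
        linarith
      have hc1 : c = 1 := by omega
      rw [hc1, mul_one] at hc
      rw [hu]
      congr 1
      omega
end

section
/- If i ∈ J, then there is no integer m ≥ 0 satisfying ξ_i − p·(p^f − 1) = p^m · (p^f − 1). -/
/-- Auxiliary: a property that is `f`-periodic (in the `↔` sense) is invariant under
adding any integer multiple of `f`. -/
lemma per_int_aux (f : ℕ) (g : ℤ → Prop) (hg : ∀ x : ℤ, g x ↔ g (x + f)) :
    ∀ (n : ℤ) (x : ℤ), g (x + n * f) ↔ g x := by
  intro n
  induction n using Int.induction_on with
  | zero => intro x; simp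
  | succ k ih =>
    intro x
    rw [show x + ((k : ℤ) + 1) * f = (x + k * f) + f by ring, ← hg, ih]
  | pred k ih =>
    intro x
    have h1 := hg (x + (-(k : ℤ) - 1) * f)
    rw [show (x + (-(k : ℤ) - 1) * f) + (f : ℤ) = x + (-(k : ℤ)) * f by ring] at h1
    rw [h1, ih]

open scoped Classical in
/-- Lemma 3.13 ("extra pairing lemma, trivial character"): assume `χ = 1`, i.e.
`ξ_i ≡ 0 (mod p^f - 1)` for all `i`. If `i ∈ J`, then there is no integer `m ≥ 0`
with `ξ_i - p (p^f - 1) = p^m (p^f - 1)`. -/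
theorem stmt_4 (p f : ℕ) (hp : p.Prime) (hf : 1 ≤ f)
    (r : ℤ → ℤ) (hr_per : ∀ i : ℤ, r (i + f) = r i)
    (hr_lb : ∀ i : ℤ, 1 ≤ r i) (hr_ub : ∀ i : ℤ, r i ≤ p)
    (J : Set ℤ) (hJ_per : ∀ i : ℤ, i ∈ J ↔ i + f ∈ J)
    (xi : ℤ → ℤ)
    (hxi : ∀ i : ℤ, xi i =
      (∑ j ∈ Finset.range f,
        (if (i + j + 1 : ℤ) ∈ J then (1 : ℤ) else -1) * r (i + j + 1) * (p : ℤ) ^ (f - 1 - j))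
      + (if i ∈ J then r i * ((p : ℤ) ^ f - 1) else 0))
    (hmax₁ : ∀ i j : ℤ, j < i → r j = 1 → (∀ k : ℤ, j < k → k < i → r k = p - 1) →
      r i = p → (∀ k : ℤ, j < k → k ≤ i → k ∉ J) → j ∉ J)
    (hmax₂ : ((∀ i : ℤ, r i = p - 1) ∨ (p = 2 ∧ ∀ i : ℤ, r i = 2)) → J.Nonempty)
    (hJ_ne_univ : (∀ i : ℤ, r i = p) → J ≠ Set.univ)
    (hcong : ∀ i : ℤ, ((p : ℤ) ^ f - 1) ∣ xi i)
    (i : ℤ) (hi : i ∈ J) :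
    ∀ m : ℕ, xi i - (p : ℤ) * ((p : ℤ) ^ f - 1) ≠ (p : ℤ) ^ m * ((p : ℤ) ^ f - 1) := by
  intro m hm
  have hp2 : (2 : ℤ) ≤ (p : ℤ) := by exact_mod_cast hp.two_le
  set G : ℤ := ∑ k ∈ Finset.range f, (p : ℤ) ^ k with hGdef
  have hGP : G * ((p : ℤ) - 1) = (p : ℤ) ^ f - 1 := geom_sum_mul _ f
  have hGpos : 0 < G := by
    refine Finset.sum_pos (fun k _ => by positivity) ?_
    exact Finset.nonempty_range_iff.mpr (by omega)
  have hPpos : 0 < (p : ℤ) ^ f - 1 := by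
    have h1 : (1 : ℤ) < (p : ℤ) ^ f := one_lt_pow₀ (by linarith) (by omega)
    linarith
  set S : ℤ := ∑ j ∈ Finset.range f,
      (if (i + j + 1 : ℤ) ∈ J then (1 : ℤ) else -1) * r (i + j + 1) * (p : ℤ) ^ (f - 1 - j)
    with hSdef
  have hxiI : xi i = S + r i * ((p : ℤ) ^ f - 1) := by rw [hxi i, if_pos hi]
  have hceq : S = ((p : ℤ) ^ m + p - r i) * ((p : ℤ) ^ f - 1) := by
    linear_combination hm - hxiI
  -- termwise bound
  have hle : ∀ j ∈ Finset.range f,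
      (if (i + j + 1 : ℤ) ∈ J then (1 : ℤ) else -1) * r (i + j + 1) * (p : ℤ) ^ (f - 1 - j)
        ≤ (p : ℤ) * (p : ℤ) ^ (f - 1 - j) := by
    intro j _
    have h1 := hr_lb (i + j + 1)
    have h2 := hr_ub (i + j + 1)
    have hpe : (0 : ℤ) ≤ (p : ℤ) ^ (f - 1 - j) := by positivity
    split_ifs with h
    · nlinarith
    · nlinarith
  have hsumbound : ∑ j ∈ Finset.range f, (p : ℤ) * (p : ℤ) ^ (f - 1 - j) = (p : ℤ) * G := by
    rw [← Finset.mul_sum, hGdef, Finset.sum_range_reflect (fun k => (p : ℤ) ^ k) f]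
  have hbound : S ≤ (p : ℤ) * G := by
    rw [hSdef, ← hsumbound]
    exact Finset.sum_le_sum hle
  have hpm1 : (1 : ℤ) ≤ (p : ℤ) ^ m := one_le_pow₀ (by linarith)
  have hri1 := hr_lb i
  have hri2 := hr_ub i
  set c : ℤ := (p : ℤ) ^ m + p - r i with hcdef
  have hcge : (p : ℤ) ^ m ≤ c := by rw [hcdef]; linarith
  have hkey : c * ((p : ℤ) - 1) ≤ (p : ℤ) := by
    have h1 : c * ((p : ℤ) ^ f - 1) ≤ (p : ℤ) * G := by rw [← hceq]; exact hbound
    rw [← hGP] at h1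
    nlinarith
  by_cases hc2 : 2 ≤ c
  · -- forces p = 2, c = 2, and S attains the maximum possible value
    have hpeq : (p : ℤ) = 2 := by nlinarith
    have hceq2 : c = 2 := by nlinarith
    have hSeq : S = ∑ j ∈ Finset.range f, (p : ℤ) * (p : ℤ) ^ (f - 1 - j) := by
      rw [hsumbound, hceq]
      rw [hpeq] at hGP ⊢
      rw [hceq2]
      linarith
    have hterm : ∀ j ∈ Finset.range f,
        (if (i + j + 1 : ℤ) ∈ J then (1 : ℤ) else -1) * r (i + j + 1) * (p : ℤ) ^ (f - 1 - j)
          = (p : ℤ) * (p : ℤ) ^ (f - 1 - j) :=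
      (Finset.sum_eq_sum_iff_of_le hle).mp hSeq
    -- each term maximal: r = p and membership in J
    have hterm' : ∀ j ∈ Finset.range f, r (i + j + 1) = (p : ℤ) ∧ (i + j + 1 : ℤ) ∈ J := by
      intro j hj
      have h := hterm j hj
      have hpe : (0 : ℤ) < (p : ℤ) ^ (f - 1 - j) := by positivity
      have h1 := hr_lb (i + j + 1)
      have h2 := hr_ub (i + j + 1)
      split_ifs at h with hJ'
      · constructor
        · have := mul_right_cancel₀ (ne_of_gt hpe) h
          linarith
        · exact hJ'
      · exfalso
        have := mul_right_cancel₀ (ne_of_gt hpe) h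
        nlinarith
    -- in particular r i = p, via j = f - 1
    have hfm : ((f - 1 : ℕ) : ℤ) = (f : ℤ) - 1 := by
      have : 1 ≤ f := hf
      omega
    have hif : i + ((f - 1 : ℕ) : ℤ) + 1 = i + f := by rw [hfm]; ring
    have hlast := hterm' (f - 1) (Finset.mem_range.mpr (by omega))
    rw [hif] at hlast
    have hri : r i = (p : ℤ) := by rw [← hr_per i]; exact hlast.1
    -- now show all r = p and J = univ, contradicting hJ_ne_univ
    have hgper : ∀ x : ℤ, (r x = (p : ℤ) ∧ x ∈ J) ↔ (r (x + f) = (p : ℤ) ∧ (x + f) ∈ J) := by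
      intro x
      rw [hr_per x, ← hJ_per x]
    have hall : ∀ k : ℤ, r k = (p : ℤ) ∧ k ∈ J := by
      intro k
      set d : ℤ := k - (i + 1) with hd
      have hf0 : (f : ℤ) ≠ 0 := Nat.cast_ne_zero.mpr (by omega)
      have hmod1 : 0 ≤ d % f := Int.emod_nonneg d hf0
      have hmod2 : d % f < f := Int.emod_lt_of_pos d (by exact_mod_cast hf)
      obtain ⟨j, hjf, hjcast⟩ : ∃ j : ℕ, j < f ∧ (j : ℤ) = d % f := by
        refine ⟨(d % f).toNat, ?_, Int.toNat_of_nonneg hmod1⟩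
        have := Int.toNat_of_nonneg hmod1
        exact_mod_cast (by rw [this]; exact_mod_cast hmod2 : ((d % f).toNat : ℤ) < (f : ℤ))
      have hk : k = (i + j + 1) + (d / f) * f := by
        have h := Int.mul_ediv_add_emod d (f : ℤ)
        linear_combination -hd - hjcast - h
      have hbase := hterm' j (Finset.mem_range.mpr hjf)
      have := (per_int_aux f (fun x => r x = (p : ℤ) ∧ x ∈ J) hgper (d / f) (i + j + 1)).mpr hbase
      rw [← hk] at this
      exact this
    refine hJ_ne_univ (fun k => (hall k).1) ?_
    exact Set.eq_univ_iff_forall.mpr (fun k => (hall k).2)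
  · -- c = 1, so r i = p and S = p^f - 1; derive p ∣ p^f - 1, contradiction
    have hc1 : c = 1 := by
      have h1 : 1 ≤ c := le_trans hpm1 hcge
      omega
    have hri : r i = (p : ℤ) := by
      have h2 : (p : ℤ) ^ m + p - r i = 1 := by rw [← hcdef]; exact hc1
      linarith
    have hSP : S = (p : ℤ) ^ f - 1 := by rw [hceq, hc1, one_mul]
    have hdvd : (p : ℤ) ∣ S := by
      rw [hSdef]
      refine Finset.dvd_sum (fun j hj => ?_)
      have hjf : j < f := Finset.mem_range.mp hj
      rcases Nat.lt_or_ge j (f - 1) with hcase | hcase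
      · exact Dvd.dvd.mul_left (dvd_pow_self (p : ℤ) (by omega)) _
      · have hj' : j = f - 1 := by omega
        subst hj'
        have hfm : ((f - 1 : ℕ) : ℤ) = (f : ℤ) - 1 := by omega
        have hif : i + ((f - 1 : ℕ) : ℤ) + 1 = i + f := by rw [hfm]; ring
        have he : f - 1 - (f - 1) = 0 := by omega
        rw [he, hif, hr_per i, hri, pow_zero, mul_one]
        exact Dvd.dvd.mul_left dvd_rfl _
    rw [hSP] at hdvd
    have hdvd2 : (p : ℤ) ∣ (p : ℤ) ^ f := dvd_pow_self _ (by omega)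
    have : (p : ℤ) ∣ 1 := by
      have := dvd_sub hdvd2 hdvd
      simpa using this
    have := Int.le_of_dvd one_pos this
    linarith
end

section
/- In K[[X]] one has ∏_{k=0}^{p^n − 1} E(ζ^k X) = E(X^{p^n}). (This is the formal power-series identity underlying the norm compatibility N_{K_n/K} E([a^{1/p^n}](π^{1/p^n})^r) = E([a]π^r) of the Artin–Hasse exponential.) -/
open PowerSeries Finset
section AHdef
variable {K : Type*} [Field K]
noncomputable def ahExp (S : PowerSeries K) : PowerSeries K :=
  PowerSeries.mk fun m => ∑ k ∈ Finset.range (m + 1),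
    (Nat.factorial k : K)⁻¹ * PowerSeries.coeff m (S ^ k)
lemma ah_coeff_pow_eq_zero {S : PowerSeries K} (hS : PowerSeries.constantCoeff S = 0)
    {m k : ℕ} (h : m < k) : PowerSeries.coeff m (S ^ k) = 0 :=
  PowerSeries.X_pow_dvd_iff.mp (pow_dvd_pow_of_dvd (PowerSeries.X_dvd_iff.mpr hS) k) m h
lemma ah_coeff_pow_mul_pow_eq_zero {A B : PowerSeries K}
    (hA : PowerSeries.constantCoeff A = 0) (hB : PowerSeries.constantCoeff B = 0)
    {m a b : ℕ} (h : m < a + b) : PowerSeries.coeff m (A ^ a * B ^ b) = 0 := by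
  have hd : (PowerSeries.X : PowerSeries K) ^ (a + b) ∣ A ^ a * B ^ b := by
    rw [pow_add]
    exact mul_dvd_mul (pow_dvd_pow_of_dvd (PowerSeries.X_dvd_iff.mpr hA) a)
      (pow_dvd_pow_of_dvd (PowerSeries.X_dvd_iff.mpr hB) b)
  exact PowerSeries.X_pow_dvd_iff.mp hd m h
lemma coeff_ahExp {S : PowerSeries K} (hS : PowerSeries.constantCoeff S = 0)
    {m N : ℕ} (h : m ≤ N) :
    PowerSeries.coeff m (ahExp S)
      = ∑ k ∈ Finset.range (N + 1), (Nat.factorial k : K)⁻¹ * PowerSeries.coeff m (S ^ k) := by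
  rw [ahExp, coeff_mk]
  refine Finset.sum_subset (Finset.range_subset_range.mpr (by omega)) fun k _ hk => ?_
  rw [ah_coeff_pow_eq_zero hS (by simpa using hk), mul_zero]
end AHdef

lemma ah_triangle_sum {M : Type*} [AddCommMonoid M] (m : ℕ) (f : ℕ → ℕ → M)
    (hf : ∀ a b, m < a + b → f a b = 0) :
    ∑ k ∈ Finset.range (m + 1), ∑ a ∈ Finset.range (k + 1), f a (k - a)
      = ∑ a ∈ Finset.range (m + 1), ∑ b ∈ Finset.range (m + 1), f a b := by
  have h1 : ∀ a ∈ Finset.range (m + 1),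
      ∑ b ∈ Finset.range (m + 1), f a b = ∑ b ∈ Finset.range (m + 1 - a), f a b := by
    intro a ha
    refine (Finset.sum_subset (Finset.range_subset_range.mpr (by omega)) fun b hb hb' => ?_).symm
    simp only [Finset.mem_range] at ha hb hb'
    exact hf a b (by omega)
  rw [Finset.sum_congr rfl h1, Finset.sum_sigma', Finset.sum_sigma']
  refine Finset.sum_nbij' (fun x => ⟨x.2, x.1 - x.2⟩) (fun y => ⟨y.1 + y.2, y.1⟩)
    ?_ ?_ ?_ ?_ ?_
  · rintro ⟨k, a⟩ hx
    simp only [Finset.mem_sigma, Finset.mem_range] at hx ⊢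
    omega
  · rintro ⟨a, b⟩ hy
    simp only [Finset.mem_sigma, Finset.mem_range] at hy ⊢
    omega
  · rintro ⟨k, a⟩ hx
    simp only [Finset.mem_sigma, Finset.mem_range] at hx
    dsimp only
    rw [Sigma.mk.inj_iff]
    exact ⟨by omega, HEq.rfl⟩
  · rintro ⟨a, b⟩ hy
    simp only [Finset.mem_sigma, Finset.mem_range] at hy
    dsimp only
    rw [Sigma.mk.inj_iff]
    exact ⟨rfl, heq_of_eq (by omega)⟩
  · rintro ⟨k, a⟩ hx
    rfl

lemma ah_inv_factorial_choose {K : Type*} [Field K] [CharZero K] {k a : ℕ} (h : a ≤ k) :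
    (Nat.factorial k : K)⁻¹ * (k.choose a : K)
      = (Nat.factorial a : K)⁻¹ * (Nat.factorial (k - a) : K)⁻¹ := by
  have hk := Nat.choose_mul_factorial_mul_factorial h
  have h1 : (Nat.factorial k : K) ≠ 0 := Nat.cast_ne_zero.mpr k.factorial_ne_zero
  have h2 : (Nat.factorial a : K) ≠ 0 := Nat.cast_ne_zero.mpr a.factorial_ne_zero
  have h3 : (Nat.factorial (k - a) : K) ≠ 0 := Nat.cast_ne_zero.mpr (k - a).factorial_ne_zero
  have hc : ((k.choose a : ℕ) : K) * (Nat.factorial a : K) * (Nat.factorial (k - a) : K)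
      = (Nat.factorial k : K) := by exact_mod_cast congrArg (Nat.cast : ℕ → K) hk
  field_simp
  linear_combination hc

section AH2
variable {K : Type*} [Field K] [CharZero K]

lemma ahExp_add {A B : PowerSeries K}
    (hA : PowerSeries.constantCoeff A = 0) (hB : PowerSeries.constantCoeff B = 0) :
    ahExp (A + B) = ahExp A * ahExp B := by
  ext m
  have key : ∀ a b : ℕ, m < a + b →
      (Nat.factorial a : K)⁻¹ * (Nat.factorial b : K)⁻¹ * PowerSeries.coeff m (A ^ a * B ^ b)
        = 0 := fun a b h => by
    rw [ah_coeff_pow_mul_pow_eq_zero hA hB h, mul_zero]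
  have hL : PowerSeries.coeff m (ahExp (A + B))
      = ∑ k ∈ Finset.range (m + 1), ∑ a ∈ Finset.range (k + 1),
          (Nat.factorial a : K)⁻¹ * (Nat.factorial (k - a) : K)⁻¹
            * PowerSeries.coeff m (A ^ a * B ^ (k - a)) := by
    rw [ahExp, coeff_mk]
    refine Finset.sum_congr rfl fun k _ => ?_
    rw [add_pow, map_sum, Finset.mul_sum]
    refine Finset.sum_congr rfl fun a ha => ?_
    rw [show ((k.choose a : ℕ) : PowerSeries K) = PowerSeries.C ((k.choose a : ℕ) : K) from
      (map_natCast (PowerSeries.C (R := K)) _).symm, PowerSeries.coeff_mul_C]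
    have hfc := ah_inv_factorial_choose (K := K) (Nat.lt_succ_iff.mp (Finset.mem_range.mp ha))
    linear_combination PowerSeries.coeff m (A ^ a * B ^ (k - a)) * hfc
  have hR : PowerSeries.coeff m (ahExp A * ahExp B)
      = ∑ a ∈ Finset.range (m + 1), ∑ b ∈ Finset.range (m + 1),
          (Nat.factorial a : K)⁻¹ * (Nat.factorial b : K)⁻¹
            * PowerSeries.coeff m (A ^ a * B ^ b) := by
    rw [PowerSeries.coeff_mul]
    have step1 : ∀ ij ∈ Finset.HasAntidiagonal.antidiagonal m,
        PowerSeries.coeff ij.1 (ahExp A) * PowerSeries.coeff ij.2 (ahExp B)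
        = ∑ a ∈ Finset.range (m + 1), ∑ b ∈ Finset.range (m + 1),
            ((Nat.factorial a : K)⁻¹ * PowerSeries.coeff ij.1 (A ^ a))
              * ((Nat.factorial b : K)⁻¹ * PowerSeries.coeff ij.2 (B ^ b)) := by
      intro ij hij
      have hm := Finset.HasAntidiagonal.mem_antidiagonal.mp hij
      rw [coeff_ahExp hA (by omega : ij.1 ≤ m), coeff_ahExp hB (by omega : ij.2 ≤ m),
        Finset.sum_mul_sum]
    rw [Finset.sum_congr rfl step1, Finset.sum_comm]
    refine Finset.sum_congr rfl fun a _ => ?_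
    rw [Finset.sum_comm]
    refine Finset.sum_congr rfl fun b _ => ?_
    rw [PowerSeries.coeff_mul, Finset.mul_sum]
    exact Finset.sum_congr rfl fun ij _ => by ring
  rw [hL, hR]
  exact ah_triangle_sum m
    (fun a b => (Nat.factorial a : K)⁻¹ * (Nat.factorial b : K)⁻¹
      * PowerSeries.coeff m (A ^ a * B ^ b)) key
end AH2

section AH3
variable {K : Type*} [Field K] [CharZero K]

lemma ahExp_zero : ahExp (0 : PowerSeries K) = 1 := by
  ext m
  rw [ahExp, coeff_mk, Finset.sum_eq_single 0]
  · simp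
  · intro k _ hk
    rw [zero_pow hk]
    simp
  · simp

lemma ahExp_finsetSum {ι : Type*} (s : Finset ι) (f : ι → PowerSeries K)
    (h : ∀ i ∈ s, PowerSeries.constantCoeff (f i) = 0) :
    ahExp (∑ i ∈ s, f i) = ∏ i ∈ s, ahExp (f i) := by
  induction s using Finset.cons_induction with
  | empty => simp [ahExp_zero]
  | cons i s hi ih =>
    rw [Finset.sum_cons, Finset.prod_cons,
      ahExp_add (h i (Finset.mem_cons_self i s)) (by
        rw [map_sum]
        exact Finset.sum_eq_zero fun j hj => h j (Finset.mem_cons_of_mem hj)),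
      ih fun j hj => h j (Finset.mem_cons_of_mem hj)]

lemma rescale_ahExp (a : K) (S : PowerSeries K) :
    PowerSeries.rescale a (ahExp S) = ahExp (PowerSeries.rescale a S) := by
  ext m
  rw [PowerSeries.coeff_rescale, ahExp, ahExp, coeff_mk, coeff_mk, Finset.mul_sum]
  refine Finset.sum_congr rfl fun k _ => ?_
  rw [← map_pow, PowerSeries.coeff_rescale]
  ring
end AH3

section PSUB
variable {K : Type*} [Field K]

noncomputable def psub (q : ℕ) (F : PowerSeries K) : PowerSeries K :=
  PowerSeries.mk fun m => if q ∣ m then PowerSeries.coeff (m / q) F else 0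

lemma coeff_psub (q : ℕ) (F : PowerSeries K) (m : ℕ) :
    PowerSeries.coeff m (psub q F) = if q ∣ m then PowerSeries.coeff (m / q) F else 0 :=
  coeff_mk _ _

lemma psub_one {q : ℕ} (hq : 0 < q) : psub q (1 : PowerSeries K) = 1 := by
  ext m
  rw [coeff_psub]
  by_cases h : q ∣ m
  · rw [if_pos h, PowerSeries.coeff_one, PowerSeries.coeff_one]
    by_cases hm : m = 0
    · subst hm; simp
    · rw [if_neg ((Nat.div_ne_zero_iff_of_dvd h).mpr ⟨hm, hq.ne'⟩), if_neg hm]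
  · rw [if_neg h, PowerSeries.coeff_one, if_neg ?_]
    rintro rfl
    exact h (dvd_zero q)

lemma psub_mul {q : ℕ} (hq : 0 < q) (F G : PowerSeries K) :
    psub q (F * G) = psub q F * psub q G := by
  ext m
  rw [PowerSeries.coeff_mul, Finset.Nat.sum_antidiagonal_eq_sum_range_succ
    (fun i j => PowerSeries.coeff i (psub q F) * PowerSeries.coeff j (psub q G)), coeff_psub]
  by_cases hm : q ∣ m
  · obtain ⟨m', rfl⟩ := hm
    rw [if_pos ⟨m', rfl⟩, Nat.mul_div_cancel_left m' hq, PowerSeries.coeff_mul,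
      Finset.Nat.sum_antidiagonal_eq_sum_range_succ
        (fun i j => PowerSeries.coeff i F * PowerSeries.coeff j G)]
    symm
    have step : ∀ i ∈ Finset.range (q * m' + 1),
        PowerSeries.coeff i (psub q F) * PowerSeries.coeff (q * m' - i) (psub q G)
          = if q ∣ i then
              PowerSeries.coeff (i / q) F * PowerSeries.coeff ((q * m' - i) / q) G
            else 0 := by
      intro i _
      rw [coeff_psub, coeff_psub]
      by_cases hqi : q ∣ i
      · rw [if_pos hqi, if_pos hqi, if_pos (Nat.dvd_sub (Dvd.intro m' rfl) hqi)]
      · rw [if_neg hqi, if_neg hqi, zero_mul]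
    rw [Finset.sum_congr rfl step, ← Finset.sum_filter]
    have hsub : ∀ c : ℕ, c ≤ m' → (q * m' - q * c) / q = m' - c := by
      intro c _
      have h1 : q * m' - q * c = (m' - c) * q := by
        rw [Nat.sub_mul, mul_comm m' q, mul_comm c q]
      rw [h1, Nat.mul_div_cancel _ hq]
    refine Finset.sum_nbij' (fun i => i / q) (fun i' => q * i') ?_ ?_ ?_ ?_ ?_
    · intro i hi
      simp only [Finset.mem_filter, Finset.mem_range] at hi
      obtain ⟨hi1, c, rfl⟩ := hi
      simp only [Finset.mem_range]
      rw [Nat.mul_div_cancel_left _ hq]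
      exact Nat.lt_succ_of_le (Nat.le_of_mul_le_mul_left (by omega) hq)
    · intro i' hi'
      simp only [Finset.mem_range] at hi'
      simp only [Finset.mem_filter, Finset.mem_range]
      exact ⟨Nat.lt_succ_of_le (Nat.mul_le_mul_left q (by omega)), Dvd.intro _ rfl⟩
    · intro i hi
      simp only [Finset.mem_filter, Finset.mem_range] at hi
      exact Nat.mul_div_cancel' hi.2
    · intro i' _
      exact Nat.mul_div_cancel_left i' hq
    · intro i hi
      simp only [Finset.mem_filter, Finset.mem_range] at hi
      obtain ⟨hi1, c, rfl⟩ := hi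
      have hc : c ≤ m' := Nat.le_of_mul_le_mul_left (by omega) hq
      rw [Nat.mul_div_cancel_left _ hq, hsub c hc]
  · rw [if_neg hm]
    symm
    refine Finset.sum_eq_zero fun i hi => ?_
    simp only [Finset.mem_range] at hi
    rw [coeff_psub, coeff_psub]
    by_cases hqi : q ∣ i
    · rw [if_pos hqi, if_neg (fun hd : q ∣ m - i => hm (by
        have h2 : i + (m - i) = m := by omega
        exact h2 ▸ Nat.dvd_add hqi hd)), mul_zero]
    · rw [if_neg hqi, zero_mul]

lemma psub_pow {q : ℕ} (hq : 0 < q) (F : PowerSeries K) (k : ℕ) :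
    psub q (F ^ k) = psub q F ^ k := by
  induction k with
  | zero => simpa using psub_one (K := K) hq
  | succ k ih => rw [pow_succ, psub_mul hq, ih, pow_succ]
end PSUB

section FINAL
variable {K : Type*} [Field K] [CharZero K]

lemma ahExp_psub {q : ℕ} (hq : 0 < q) {S : PowerSeries K}
    (hS : PowerSeries.constantCoeff S = 0) :
    ahExp (psub q S) = psub q (ahExp S) := by
  ext m
  rw [ahExp, coeff_mk, coeff_psub]
  have hstep : ∀ k, PowerSeries.coeff m (psub q S ^ k)
      = if q ∣ m then PowerSeries.coeff (m / q) (S ^ k) else 0 := fun k => by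
    rw [← psub_pow hq, coeff_psub]
  by_cases hm : q ∣ m
  · rw [if_pos hm]
    simp only [hstep, if_pos hm]
    rw [coeff_ahExp hS (Nat.div_le_self m q)]
  · rw [if_neg hm]
    refine Finset.sum_eq_zero fun k _ => ?_
    rw [hstep, if_neg hm, mul_zero]

lemma ah_sum_pow_primroot {N : ℕ} {ζ : K} (hζ : IsPrimitiveRoot ζ N) (m : ℕ) :
    ∑ k ∈ Finset.range N, (ζ ^ k) ^ m = if N ∣ m then (N : K) else 0 := by
  have hrw : ∀ k, (ζ ^ k) ^ m = (ζ ^ m) ^ k := fun k => by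
    rw [← pow_mul, ← pow_mul, mul_comm]
  rw [Finset.sum_congr rfl fun k _ => hrw k]
  by_cases h : N ∣ m
  · rw [if_pos h, (hζ.pow_eq_one_iff_dvd m).mpr h]
    simp
  · rw [if_neg h, geom_sum_eq (fun h1 => h ((hζ.pow_eq_one_iff_dvd m).mp h1)) N,
      ← pow_mul, mul_comm m N, pow_mul, hζ.pow_eq_one, one_pow, sub_self, zero_div]

open scoped Classical in
lemma ah_sum_rescale (p n : ℕ) (hp : p.Prime)
    (ζ : K) (hζ : IsPrimitiveRoot ζ (p ^ n)) (S : PowerSeries K)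
    (hS : S = PowerSeries.mk fun m => if ∃ e : ℕ, p ^ e = m then (m : K)⁻¹ else 0) :
    ∑ k ∈ Finset.range (p ^ n), PowerSeries.rescale (ζ ^ k) S = psub (p ^ n) S := by
  have hN : 0 < p ^ n := pow_pos hp.pos n
  ext m
  rw [map_sum, coeff_psub]
  simp_rw [PowerSeries.coeff_rescale]
  rw [← Finset.sum_mul, ah_sum_pow_primroot hζ m]
  by_cases hm : p ^ n ∣ m
  · rw [if_pos hm, if_pos hm]
    subst hS
    rw [coeff_mk, coeff_mk]
    rcases Nat.eq_zero_or_pos m with rfl | hm0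
    · have hno : ¬ ∃ e : ℕ, p ^ e = 0 := by
        rintro ⟨e, he⟩
        exact (pow_ne_zero e hp.pos.ne') he
      simp [hno]
    · obtain ⟨m', rfl⟩ := hm
      have hm' : 0 < m' := Nat.pos_of_ne_zero fun h => by subst h; simp at hm0
      rw [Nat.mul_div_cancel_left m' hN]
      by_cases he : ∃ e : ℕ, p ^ e = p ^ n * m'
      · obtain ⟨e, he⟩ := he
        have hdvd : p ^ n ∣ p ^ e := he ▸ Dvd.intro m' rfl
        have hne : n ≤ e := (Nat.pow_dvd_pow_iff_le_right hp.one_lt).mp hdvd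
        have hm'' : m' = p ^ (e - n) := by
          have h2 : p ^ n * m' = p ^ n * p ^ (e - n) := by
            rw [← pow_add, Nat.add_sub_cancel' hne, he]
          exact Nat.eq_of_mul_eq_mul_left hN h2
        rw [if_pos ⟨e, he⟩, if_pos ⟨e - n, hm''.symm⟩]
        have hp0 : (p : K) ≠ 0 := Nat.cast_ne_zero.mpr hp.pos.ne'
        push_cast
        rw [mul_inv, ← mul_assoc, mul_inv_cancel₀ (pow_ne_zero n hp0), one_mul]
      · have he2 : ¬ ∃ f : ℕ, p ^ f = m' := by
          rintro ⟨f, rfl⟩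
          exact he ⟨n + f, by rw [pow_add]⟩
        rw [if_neg he, mul_zero, if_neg he2]
  · rw [if_neg hm, if_neg hm, zero_mul]
end FINAL

open scoped Classical in
/-- Lemma 3.6 ("norm compatible Artin–Hasse"), formal power-series form: if `ζ` is a
primitive `p^n`-th root of unity in a field `K` of characteristic zero, then
`∏_{k=0}^{p^n - 1} E(ζ^k X) = E(X^{p^n})` in `K⟦X⟧`. Here `S = ∑_{m≥0} X^{p^m}/p^m`
(its coefficient at an index `m` which is a power of `p`, say `m = p^e`, is
`1/p^e = 1/m`), `E = exp(S)` is the Artin–Hasse exponential, computed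
coefficientwise (`S` has zero constant term, so the coefficient of `X^m` in
`exp(S) = ∑_k S^k/k!` is the finite sum `∑_{k ≤ m} (coeff of X^m in S^k)/k!`),
`E(ζ^k X)` is `rescale (ζ^k) E`, and `E(X^{p^n})` is the substitution of `X^{p^n}`
into `E`, whose coefficient at `m` is the coefficient of `E` at `m / p^n` when
`p^n ∣ m`, and `0` otherwise. -/
theorem stmt_6 (p n : ℕ) (hp : p.Prime) (hn : 1 ≤ n)
    (K : Type*) [Field K] [CharZero K]
    (ζ : K) (hζ : IsPrimitiveRoot ζ (p ^ n))
    (S E : PowerSeries K)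
    (hS : S = PowerSeries.mk fun m => if ∃ e : ℕ, p ^ e = m then (m : K)⁻¹ else 0)
    (hE : E = PowerSeries.mk fun m => ∑ k ∈ Finset.range (m + 1),
      (Nat.factorial k : K)⁻¹ * PowerSeries.coeff m (S ^ k)) :
    ∏ k ∈ Finset.range (p ^ n), PowerSeries.rescale (ζ ^ k) E
      = PowerSeries.mk fun m =>
          if p ^ n ∣ m then PowerSeries.coeff (m / p ^ n) E else 0 := by
  have hN : 0 < p ^ n := pow_pos hp.pos n
  have hS0 : PowerSeries.constantCoeff S = 0 := by
    rw [hS, ← PowerSeries.coeff_zero_eq_constantCoeff, coeff_mk, if_neg]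
    rintro ⟨e, he⟩
    exact (pow_ne_zero e hp.pos.ne') he
  have hES : E = ahExp S := by rw [hE]; rfl
  have hr0 : ∀ a : K, PowerSeries.constantCoeff (PowerSeries.rescale a S) = 0 := fun a => by
    rw [← PowerSeries.coeff_zero_eq_constantCoeff, PowerSeries.coeff_rescale, pow_zero, one_mul,
      PowerSeries.coeff_zero_eq_constantCoeff, hS0]
  calc ∏ k ∈ Finset.range (p ^ n), PowerSeries.rescale (ζ ^ k) E
      = ∏ k ∈ Finset.range (p ^ n), ahExp (PowerSeries.rescale (ζ ^ k) S) :=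
        Finset.prod_congr rfl fun k _ => by rw [hES, rescale_ahExp]
    _ = ahExp (∑ k ∈ Finset.range (p ^ n), PowerSeries.rescale (ζ ^ k) S) :=
        (ahExp_finsetSum _ _ fun k _ => hr0 _).symm
    _ = ahExp (psub (p ^ n) S) := by rw [ah_sum_rescale p n hp ζ hζ S hS]
    _ = psub (p ^ n) (ahExp S) := ahExp_psub hN hS0
    _ = _ := by
        ext m
        rw [← hES, coeff_psub, coeff_mk]
end

section
/- For every integer i one has ξ_i ≡ p · ξ_{i−1} (mod p^f − 1). -/
lemma key_sum (f : ℕ) (hf : 1 ≤ f) (p : ℤ) (c : ℕ → ℤ) :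
    (∑ j ∈ Finset.range f, c (j + 1) * p ^ (f - 1 - j))
      - p * (∑ j ∈ Finset.range f, c j * p ^ (f - 1 - j))
      = c f - c 0 * p ^ f := by
  obtain ⟨g, rfl⟩ : ∃ g, f = g + 1 := ⟨f - 1, (Nat.succ_pred_eq_of_pos hf).symm⟩
  rw [Finset.sum_range_succ, Finset.sum_range_succ' (fun j => c j * p ^ (g + 1 - 1 - j)) g]
  have hsum : p * ∑ j ∈ Finset.range g, c (j + 1) * p ^ (g + 1 - 1 - (j + 1))
      = ∑ j ∈ Finset.range g, c (j + 1) * p ^ (g + 1 - 1 - j) := by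
    rw [Finset.mul_sum]
    refine Finset.sum_congr rfl fun j hj => ?_
    have hj' : j < g := Finset.mem_range.mp hj
    have h : g + 1 - 1 - j = (g + 1 - 1 - (j + 1)) + 1 := by omega
    rw [h, pow_succ]; ring
  rw [mul_add, hsum]
  simp only [Nat.add_sub_cancel, Nat.sub_self, pow_zero, mul_one, Nat.sub_zero]
  ring

open scoped Classical in
/-- For every integer `i` one has `ξ_i ≡ p ξ_{i-1} (mod p^f - 1)`. -/
theorem stmt_9 (p f : ℕ) (hp : p.Prime) (hf : 1 ≤ f)
    (r : ℤ → ℤ) (hr_per : ∀ i : ℤ, r (i + f) = r i)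
    (hr_lb : ∀ i : ℤ, 1 ≤ r i) (hr_ub : ∀ i : ℤ, r i ≤ p)
    (J : Set ℤ) (hJ_per : ∀ i : ℤ, i ∈ J ↔ i + f ∈ J)
    (xi : ℤ → ℤ)
    (hxi : ∀ i : ℤ, xi i =
      (∑ j ∈ Finset.range f,
        (if (i + j + 1 : ℤ) ∈ J then (1 : ℤ) else -1) * r (i + j + 1) * (p : ℤ) ^ (f - 1 - j))
      + (if i ∈ J then r i * ((p : ℤ) ^ f - 1) else 0)) :
    ∀ i : ℤ, ((p : ℤ) ^ f - 1) ∣ (xi i - (p : ℤ) * xi (i - 1)) := by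
  intro i
  rw [hxi i, hxi (i - 1)]
  set c : ℕ → ℤ := fun j => (if (i + (j : ℤ)) ∈ J then (1 : ℤ) else -1) * r (i + j) with hc
  have h1 : ∀ j ∈ Finset.range f,
      (if (i + (j : ℤ) + 1) ∈ J then (1 : ℤ) else -1) * r (i + j + 1) * (p : ℤ) ^ (f - 1 - j)
        = c (j + 1) * (p : ℤ) ^ (f - 1 - j) := by
    intro j _
    simp only [hc, Nat.cast_add, Nat.cast_one, ← add_assoc]
  have h2 : ∀ j ∈ Finset.range f,
      (if ((i - 1) + (j : ℤ) + 1) ∈ J then (1 : ℤ) else -1) * r ((i - 1) + j + 1) * (p : ℤ) ^ (f - 1 - j)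
        = c j * (p : ℤ) ^ (f - 1 - j) := by
    intro j _
    have h : (i - 1) + (j : ℤ) + 1 = i + j := by ring
    rw [h]
  rw [Finset.sum_congr rfl h1, Finset.sum_congr rfl h2]
  have hcf : c f = c 0 := by
    by_cases h : i ∈ J
    · simp [hc, h, (hJ_per i).mp h, hr_per i]
    · have h' : i + (f : ℤ) ∉ J := fun hh => h ((hJ_per i).mpr hh)
      simp [hc, h, h', hr_per i]
  have hkey := key_sum f hf (p : ℤ) c
  have heq : ((∑ j ∈ Finset.range f, c (j + 1) * (p : ℤ) ^ (f - 1 - j))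
      + (if i ∈ J then r i * ((p : ℤ) ^ f - 1) else 0))
      - (p : ℤ) * ((∑ j ∈ Finset.range f, c j * (p : ℤ) ^ (f - 1 - j))
      + (if (i - 1) ∈ J then r (i - 1) * ((p : ℤ) ^ f - 1) else 0))
      = (-(c 0)) * ((p : ℤ) ^ f - 1)
        + (if i ∈ J then r i * ((p : ℤ) ^ f - 1) else 0)
        - (p : ℤ) * (if (i - 1) ∈ J then r (i - 1) * ((p : ℤ) ^ f - 1) else 0) := by
    have : (∑ j ∈ Finset.range f, c (j + 1) * (p : ℤ) ^ (f - 1 - j))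
        - (p : ℤ) * (∑ j ∈ Finset.range f, c j * (p : ℤ) ^ (f - 1 - j))
        = (-(c 0)) * ((p : ℤ) ^ f - 1) := by
      rw [hkey, hcf]; ring
    linarith [this]
  rw [heq]
  refine dvd_sub (dvd_add (dvd_mul_left _ _) ?_) ?_
  · split_ifs with h
    · exact dvd_mul_left _ _
    · exact dvd_zero _
  · split_ifs with h
    · exact Dvd.dvd.mul_left (dvd_mul_left _ _) _
    · simp
end

section
/- For every integer i one has n′_i > 0. -/
lemma aux_sum (p : ℤ) (hp : 2 ≤ p) : ∀ f k0 : ℕ, k0 < f → ∀ b : ℕ → ℤ,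
    (∀ k, 1 ≤ b k) → (∀ k, k < k0 → b k = p - 1) → b k0 = p →
    p ^ f ≤ ∑ k ∈ Finset.range f, b k * p ^ (f - 1 - k) := by
  intro f
  induction f with
  | zero => intro k0 h; omega
  | succ f' ih =>
    intro k0 hk0 b hb1 hbeq hbk0
    rw [Finset.sum_range_succ']
    have hpow : ∀ k : ℕ, (0:ℤ) ≤ p ^ k := fun k => pow_nonneg (by linarith) k
    cases k0 with
    | zero =>
      have h1 : (0:ℤ) ≤ ∑ k ∈ Finset.range f', b (k+1) * p ^ (f' + 1 - 1 - (k+1)) :=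
        Finset.sum_nonneg fun k _ => mul_nonneg (by linarith [hb1 (k+1)]) (hpow _)
      have h2 : b 0 * p ^ (f' + 1 - 1 - 0) = p ^ (f'+1) := by
        rw [hbk0]
        have : f' + 1 - 1 - 0 = f' := by omega
        rw [this, pow_succ]; ring
      linarith
    | succ m =>
      have hmf : m < f' := by omega
      have hih := ih m hmf (fun k => b (k+1)) (fun k => hb1 (k+1))
        (fun k hk => hbeq (k+1) (by omega)) hbk0
      have hre : ∑ k ∈ Finset.range f', b (k+1) * p ^ (f' + 1 - 1 - (k+1))
          = ∑ k ∈ Finset.range f', b (k+1) * p ^ (f' - 1 - k) := by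
        apply Finset.sum_congr rfl
        intro k _
        have : f' + 1 - 1 - (k+1) = f' - 1 - k := by omega
        rw [this]
      have hb0 : b 0 = p - 1 := hbeq 0 (by omega)
      rw [hre, hb0]
      have he : f' + 1 - 1 - 0 = f' := by omega
      rw [he]
      have : p ^ (f'+1) = p ^ f' + (p-1) * p ^ f' := by rw [pow_succ]; ring
      linarith

/-- For every integer `i` one has `n'_i > 0`. Here `n'` and `t` are characterized by: if `a (i-1) ≠ p` then
`n' i = n (i-1)` and `t i = i - 1`; if `a (i-1) = p` then, `j` being the greatest
integer less than `i` with `a (j-1) ≠ p - 1`, we have `n' i = n (j-1) - (p^f - 1)`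
and `t i = j - 1`. -/
theorem stmt_10 (p f : ℕ) (hp : p.Prime) (hf : 1 ≤ f)
    (a : ℤ → ℤ) (ha_per : ∀ i : ℤ, a (i + f) = a i)
    (ha_lb : ∀ i : ℤ, 1 ≤ a i) (ha_ub : ∀ i : ℤ, a i ≤ p)
    (ha_ne : ∃ i : ℤ, a i ≠ p)
    (n : ℤ → ℤ)
    (hn : ∀ i : ℤ, n i = ∑ j ∈ Finset.range f, a (i + j + 1) * (p : ℤ) ^ (f - 1 - j))
    (n' t : ℤ → ℤ)
    (hn't₁ : ∀ i : ℤ, a (i - 1) ≠ p → n' i = n (i - 1) ∧ t i = i - 1)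
    (hn't₂ : ∀ i : ℤ, a (i - 1) = p → ∃ j : ℤ, j < i ∧ a (j - 1) ≠ p - 1 ∧
      (∀ k : ℤ, j < k → k < i → a (k - 1) = p - 1) ∧
      n' i = n (j - 1) - ((p : ℤ) ^ f - 1) ∧ t i = j - 1) :
    ∀ i : ℤ, 0 < n' i := by
  intro i
  have hp2 : (2:ℤ) ≤ (p:ℤ) := by exact_mod_cast hp.two_le
  have hf1 : (1:ℤ) ≤ (f:ℤ) := by exact_mod_cast hf
  by_cases hcase : a (i-1) = p
  · obtain ⟨j, hji, hjne, hmid, hn'eq, ht⟩ := hn't₂ i hcase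
    have hper : a (i-1) = a (i-1-f) := by
      have h := ha_per (i-1-f)
      rw [sub_add_cancel] at h
      exact h
    have hk0lt : i - 1 - j < (f:ℤ) := by
      by_contra h
      push_neg at h
      have hm := hmid (i - f) (by omega) (by omega)
      have hm2 : a (i - 1 - f) = p - 1 := by
        rw [show i - (f:ℤ) - 1 = i - 1 - f by ring] at hm; exact hm
      rw [← hper, hcase] at hm2
      linarith
    set k0 : ℕ := (i - 1 - j).toNat with hk0def
    have hk0' : (k0 : ℤ) = i - 1 - j := Int.toNat_of_nonneg (by omega)
    have hk0f : k0 < f := by omega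
    have key := aux_sum (p:ℤ) hp2 f k0 hk0f (fun k => a (j + k))
      (fun k => ha_lb _)
      (fun k hk => by
        have hkz : (k:ℤ) < (k0:ℤ) := by exact_mod_cast hk
        have := hmid (j + k + 1) (by omega) (by omega)
        simpa using this)
      (by
        show a (j + (k0:ℤ)) = p
        rw [hk0', show j + (i - 1 - j) = i - 1 by ring]
        exact hcase)
    rw [hn'eq, hn]
    have hsum : ∑ k ∈ Finset.range f, a (j - 1 + k + 1) * (p:ℤ) ^ (f - 1 - k)
        = ∑ k ∈ Finset.range f, a (j + k) * (p:ℤ) ^ (f - 1 - k) := by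
      apply Finset.sum_congr rfl
      intro k _
      rw [show j - 1 + (k:ℤ) + 1 = j + k by ring]
    rw [hsum]
    linarith
  · obtain ⟨hn'eq, ht⟩ := hn't₁ i hcase
    rw [hn'eq, hn]
    apply Finset.sum_pos
    · intro k _
      exact mul_pos (by linarith [ha_lb (i-1+k+1)]) (pow_pos (by linarith) _)
    · exact Finset.nonempty_range_iff.mpr (by omega)
end

section
/- Suppose i ∈ J, and that for some integer s > i the following hold: none of i+1, …, s lies in J; a_i = a_{i+1} = … = a_{s−2} = p−1 (a vacuous condition if s = i+1); and a_{s−1} = p. Then ξ_i < p · n_{i−1}; in particular ξ_i ≠ p · n_{i−1}. -/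
lemma geom_aux (p f : ℕ) : ∀ m ≤ f, ∑ j ∈ Finset.range m, ((p:ℤ) - 1) * (p:ℤ)^(f - j)
    = (p:ℤ)^(f+1) - (p:ℤ)^(f+1-m) := by
  intro m
  induction m with
  | zero => simp
  | succ k ih =>
    intro hk
    rw [Finset.sum_range_succ, ih (by omega)]
    have h1 : f + 1 - k = (f - k) + 1 := by omega
    have h2 : f + 1 - (k+1) = f - k := by omega
    rw [h1, h2, pow_succ]
    ring

open scoped Classical in
/-- Suppose `i ∈ J` and for some integer `s > i` we have: none of `i+1, …, s` lies in
`J`; `a_i = a_{i+1} = ⋯ = a_{s-2} = p - 1`; and `a_{s-1} = p`. Then `ξ_i < p n_{i-1}`;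
in particular `ξ_i ≠ p n_{i-1}`. -/
theorem stmt_11 (p f : ℕ) (hp : p.Prime) (hf : 1 ≤ f)
    (r : ℤ → ℤ) (hr_per : ∀ i : ℤ, r (i + f) = r i)
    (hr_lb : ∀ i : ℤ, 1 ≤ r i) (hr_ub : ∀ i : ℤ, r i ≤ p)
    (J : Set ℤ) (hJ_per : ∀ i : ℤ, i ∈ J ↔ i + f ∈ J)
    (xi : ℤ → ℤ)
    (hxi : ∀ i : ℤ, xi i =
      (∑ j ∈ Finset.range f,
        (if (i + j + 1 : ℤ) ∈ J then (1 : ℤ) else -1) * r (i + j + 1) * (p : ℤ) ^ (f - 1 - j))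
      + (if i ∈ J then r i * ((p : ℤ) ^ f - 1) else 0))
    (a : ℤ → ℤ) (ha_per : ∀ i : ℤ, a (i + f) = a i)
    (ha_lb : ∀ i : ℤ, 1 ≤ a i) (ha_ub : ∀ i : ℤ, a i ≤ p)
    (ha_ne : ∃ i : ℤ, a i ≠ p)
    (n : ℤ → ℤ)
    (hn : ∀ i : ℤ, n i = ∑ j ∈ Finset.range f, a (i + j + 1) * (p : ℤ) ^ (f - 1 - j))
    (i s : ℤ) (hi : i ∈ J) (his : i < s)
    (hsJ : ∀ k : ℤ, i < k → k ≤ s → k ∉ J)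
    (ha₁ : ∀ k : ℤ, i ≤ k → k ≤ s - 2 → a k = p - 1)
    (ha₂ : a (s - 1) = p) :
    xi i < (p : ℤ) * n (i - 1) ∧ xi i ≠ (p : ℤ) * n (i - 1) := by
  have hp2 : 2 ≤ p := hp.two_le
  have hpz : (0:ℤ) < (p:ℤ) := by exact_mod_cast hp.pos
  set t : ℕ := (s - i).toNat with htdef
  have ht : (t : ℤ) = s - i := Int.toNat_of_nonneg (by omega)
  have ht1 : 1 ≤ t := by omega
  have htf : t ≤ f := by
    by_contra h
    push_neg at h
    have h1 : a (s - 1 - f) = (p:ℤ) - 1 := ha₁ _ (by omega) (by omega)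
    have h2 : a (s - 1 - (f:ℤ) + f) = a (s - 1 - f) := ha_per _
    have h3 : s - 1 - (f:ℤ) + f = s - 1 := by ring
    rw [h3, ha₂] at h2
    omega
  have hsplit : ∀ g : ℕ → ℤ, ∑ j ∈ Finset.range f, g j
      = ∑ j ∈ Finset.range t, g j + ∑ j ∈ Finset.Ico t f, g j := by
    intro g
    exact (Finset.sum_range_add_sum_Ico g htf).symm
  -- the carry identity
  have hA : ∑ j ∈ Finset.range t, a (i + j) * (p:ℤ)^(f - j) = (p:ℤ)^(f+1) := by
    obtain ⟨u, hu⟩ : ∃ u, t = u + 1 := ⟨t - 1, by omega⟩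
    rw [hu, Finset.sum_range_succ]
    have hsum : ∑ j ∈ Finset.range u, a (i + j) * (p:ℤ)^(f - j)
        = ∑ j ∈ Finset.range u, ((p:ℤ) - 1) * (p:ℤ)^(f - j) := by
      apply Finset.sum_congr rfl
      intro j hj
      have hj' : (j:ℤ) < u := by exact_mod_cast Finset.mem_range.mp hj
      rw [ha₁ (i + j) (by omega) (by omega)]
    have hiu : i + (u:ℤ) = s - 1 := by omega
    rw [hsum, geom_aux p f u (by omega), hiu, ha₂]
    have h1 : f + 1 - u = (f - u) + 1 := by omega
    rw [h1, pow_succ]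
    ring
  -- rewrite p * n (i-1)
  have hn' : (p:ℤ) * n (i - 1) = ∑ j ∈ Finset.range t, a (i + j) * (p:ℤ)^(f - j)
      + ∑ j ∈ Finset.Ico t f, a (i + j) * (p:ℤ)^(f - j) := by
    rw [hn, Finset.mul_sum,
      hsplit (fun j => (p:ℤ) * (a (i - 1 + j + 1) * (p:ℤ)^(f - 1 - j)))]
    congr 1
    all_goals {
      apply Finset.sum_congr rfl
      intro j hj
      have hj' : j < f := by
        simp only [Finset.mem_range, Finset.mem_Ico] at hj
        omega
      have h1 : i - 1 + (j:ℤ) + 1 = i + j := by ring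
      have h2 : f - j = (f - 1 - j) + 1 := by omega
      rw [h1, h2, pow_succ]
      ring }
  -- rewrite xi i
  have hxi' : xi i = (∑ j ∈ Finset.range t,
        (if (i + j + 1 : ℤ) ∈ J then (1 : ℤ) else -1) * r (i + j + 1) * (p:ℤ)^(f - 1 - j))
      + (∑ j ∈ Finset.Ico t f,
        (if (i + j + 1 : ℤ) ∈ J then (1 : ℤ) else -1) * r (i + j + 1) * (p:ℤ)^(f - 1 - j))
      + r i * ((p:ℤ)^f - 1) := by
    rw [hxi, if_pos hi,
      hsplit (fun j => (if (i + j + 1 : ℤ) ∈ J then (1 : ℤ) else -1) * r (i + j + 1)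
        * (p:ℤ)^(f - 1 - j))]
  have hB1 : (∑ j ∈ Finset.range t,
      (if (i + j + 1 : ℤ) ∈ J then (1 : ℤ) else -1) * r (i + j + 1) * (p:ℤ)^(f - 1 - j)) ≤ 0 := by
    apply Finset.sum_nonpos
    intro j hj
    have hj' : (j:ℤ) < t := by exact_mod_cast Finset.mem_range.mp hj
    have hnJ : (i + j + 1 : ℤ) ∉ J := hsJ _ (by omega) (by omega)
    rw [if_neg hnJ]
    have h0 : (0:ℤ) ≤ (p:ℤ)^(f - 1 - j) := by positivity
    have h1 := hr_lb (i + j + 1)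
    nlinarith
  have hB2 : (∑ j ∈ Finset.Ico t f,
      (if (i + j + 1 : ℤ) ∈ J then (1 : ℤ) else -1) * r (i + j + 1) * (p:ℤ)^(f - 1 - j))
      ≤ ∑ j ∈ Finset.Ico t f, (p:ℤ)^(f - j) := by
    apply Finset.sum_le_sum
    intro j hj
    have hj' : j < f := (Finset.mem_Ico.mp hj).2
    have h2 : f - j = (f - 1 - j) + 1 := by omega
    have h0 : (0:ℤ) ≤ (p:ℤ)^(f - 1 - j) := by positivity
    have h1 := hr_lb (i + j + 1)
    have h3 := hr_ub (i + j + 1)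
    rw [h2, pow_succ]
    by_cases hc : (i + j + 1 : ℤ) ∈ J
    · rw [if_pos hc]; nlinarith
    · rw [if_neg hc]; nlinarith
  have hB3 : ∑ j ∈ Finset.Ico t f, (p:ℤ)^(f - j)
      ≤ ∑ j ∈ Finset.Ico t f, a (i + j) * (p:ℤ)^(f - j) := by
    apply Finset.sum_le_sum
    intro j hj
    have h0 : (0:ℤ) ≤ (p:ℤ)^(f - j) := by positivity
    have h1 := ha_lb (i + j)
    nlinarith
  have hC : r i * ((p:ℤ)^f - 1) ≤ (p:ℤ)^(f+1) - (p:ℤ) := by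
    have h1 := hr_ub i
    have h2 := hr_lb i
    have h3 : (1:ℤ) ≤ (p:ℤ)^f := one_le_pow₀ (by omega)
    have h4 : (p:ℤ)^(f+1) = (p:ℤ)^f * p := pow_succ _ _
    nlinarith
  have hlt : xi i < (p:ℤ) * n (i - 1) := by
    rw [hxi', hn', hA]
    linarith
  exact ⟨hlt, ne_of_lt hlt⟩
end

section
/- Suppose i ∈ J, m ≥ 1 is an integer, and j is an integer with i−m+2 ≤ j < i such that: a_{i−m} ≠ p−1; a_{i−m+1} = … = a_{j−2} = p−1 (a vacuous condition if j = i−m+2); a_{j−1} = p; and none of i−m+1, …, j lies in J. Then ξ_i ≠ p^m · (n_{i−m} − (p^f − 1)). -/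
open scoped Classical in
/-- Suppose `i ∈ J`, `m ≥ 1`, and `j` is an integer with `i - m + 2 ≤ j < i` such
that `a_{i-m} ≠ p - 1`, `a_{i-m+1} = ⋯ = a_{j-2} = p - 1`, `a_{j-1} = p`, and none of
`i-m+1, …, j` lies in `J`. Then `ξ_i ≠ p^m (n_{i-m} - (p^f - 1))`. -/
theorem stmt_12 (p f : ℕ) (hp : p.Prime) (hf : 1 ≤ f)
    (r : ℤ → ℤ) (hr_per : ∀ i : ℤ, r (i + f) = r i)
    (hr_lb : ∀ i : ℤ, 1 ≤ r i) (hr_ub : ∀ i : ℤ, r i ≤ p)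
    (J : Set ℤ) (hJ_per : ∀ i : ℤ, i ∈ J ↔ i + f ∈ J)
    (xi : ℤ → ℤ)
    (hxi : ∀ i : ℤ, xi i =
      (∑ j ∈ Finset.range f,
        (if (i + j + 1 : ℤ) ∈ J then (1 : ℤ) else -1) * r (i + j + 1) * (p : ℤ) ^ (f - 1 - j))
      + (if i ∈ J then r i * ((p : ℤ) ^ f - 1) else 0))
    (hmax₁ : ∀ i j : ℤ, j < i → r j = 1 → (∀ k : ℤ, j < k → k < i → r k = p - 1) →
      r i = p → (∀ k : ℤ, j < k → k ≤ i → k ∉ J) → j ∉ J)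
    (hmax₂ : ((∀ i : ℤ, r i = p - 1) ∨ (p = 2 ∧ ∀ i : ℤ, r i = 2)) → J.Nonempty)
    (hJ_ne_univ : (∀ i : ℤ, r i = p) → J ≠ Set.univ)
    (a : ℤ → ℤ) (ha_per : ∀ i : ℤ, a (i + f) = a i)
    (ha_lb : ∀ i : ℤ, 1 ≤ a i) (ha_ub : ∀ i : ℤ, a i ≤ p)
    (ha_ne : ∃ i : ℤ, a i ≠ p)
    (n : ℤ → ℤ)
    (hn : ∀ i : ℤ, n i = ∑ j ∈ Finset.range f, a (i + j + 1) * (p : ℤ) ^ (f - 1 - j))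
    (i : ℤ) (hi : i ∈ J) (m : ℕ) (hm : 1 ≤ m) (j : ℤ)
    (hj₁ : i - m + 2 ≤ j) (hj₂ : j < i)
    (ha₁ : a (i - m) ≠ p - 1)
    (ha₂ : ∀ k : ℤ, i - m + 1 ≤ k → k ≤ j - 2 → a k = p - 1)
    (ha₃ : a (j - 1) = p)
    (hJm : ∀ k : ℤ, i - m + 1 ≤ k → k ≤ j → k ∉ J) :
    xi i ≠ (p : ℤ) ^ m * (n (i - m) - ((p : ℤ) ^ f - 1)) := by
  intro heq
  have hP2 : (2 : ℤ) ≤ (p : ℤ) := by exact_mod_cast hp.two_le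
  -- the gap `d = i - j`
  obtain ⟨d, hd⟩ : ∃ d : ℕ, (d : ℤ) = i - j :=
    ⟨(i - j).toNat, Int.toNat_of_nonneg (by omega)⟩
  have hd1 : 1 ≤ d := by omega
  have hdm : d + 2 ≤ m := by omega
  -- `m ≤ f + d + 1`
  have hmf : m ≤ f + d + 1 := by
    by_contra hcon
    push_neg at hcon
    have h1 : a (j - 1 - f) = (p : ℤ) - 1 := ha₂ _ (by omega) (by omega)
    have h2 := ha_per (j - 1 - f)
    rw [show j - 1 - (f : ℤ) + f = j - 1 by ring, ha₃] at h2
    omega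
  set w : ℕ := f + d + 1 - m with hwdef
  have hmw : m + w = f + d + 1 := by omega
  have hwf : w + 1 ≤ f := by omega
  set v' : ℕ := f - w - 1 with hv'def
  have hv' : f = w + (v' + 1) := by omega
  -- rewrite `n (i - m)` as a reflected sum
  have e1 : n (i - m) = ∑ u ∈ Finset.range f, a (i - m - u) * (p : ℤ) ^ u := by
    rw [hn, ← Finset.sum_range_reflect (fun u => a (i - (m : ℤ) - u) * (p : ℤ) ^ u) f]
    apply Finset.sum_congr rfl
    intro jx hjx
    simp only [Finset.mem_range] at hjx
    have hcast : ((f - 1 - jx : ℕ) : ℤ) = (f : ℤ) - 1 - jx := by omega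
    congr 1
    have h2 := ha_per (i - (m : ℤ) - ((f : ℤ) - 1 - jx))
    rw [show i - (m : ℤ) - ((f : ℤ) - 1 - jx) + f = i - m + jx + 1 by ring] at h2
    rw [hcast, ← h2]
  -- split the sum
  have e2 : n (i - m) =
      (∑ u ∈ Finset.range w, a (i - m - u) * (p : ℤ) ^ u) +
        ∑ t ∈ Finset.range (v' + 1), a (i - m - (w + t : ℕ)) * (p : ℤ) ^ (w + t) := by
    rw [e1]
    conv_lhs => rw [show f = w + (v' + 1) from hv']
    rw [Finset.sum_range_add]
  -- the upper part of the sum is `p ^ f`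
  have e3 : (∑ t ∈ Finset.range (v' + 1), a (i - m - (w + t : ℕ)) * (p : ℤ) ^ (w + t))
      = (p : ℤ) ^ f := by
    rw [Finset.sum_range_succ']
    have h0 : a (i - (m : ℤ) - ((w + 0 : ℕ) : ℤ)) = (p : ℤ) := by
      have h2 := ha_per (i - (m : ℤ) - ((w + 0 : ℕ) : ℤ))
      rw [show i - (m : ℤ) - ((w + 0 : ℕ) : ℤ) + f = j - 1 by push_cast; omega, ha₃] at h2
      exact h2.symm
    have hterm : ∀ t ∈ Finset.range v',
        a (i - (m : ℤ) - ((w + (t + 1) : ℕ) : ℤ)) * (p : ℤ) ^ (w + (t + 1))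
          = (((p : ℤ) - 1) * (p : ℤ) ^ (w + 1)) * (p : ℤ) ^ t := by
      intro t ht
      simp only [Finset.mem_range] at ht
      have h2 := ha_per (i - (m : ℤ) - ((w + (t + 1) : ℕ) : ℤ))
      have h3 : a (i - (m : ℤ) - ((w + (t + 1) : ℕ) : ℤ) + f) = (p : ℤ) - 1 :=
        ha₂ _ (by push_cast; omega) (by push_cast; omega)
      rw [h2] at h3
      rw [h3, show w + (t + 1) = (w + 1) + t by omega, pow_add]
      ring
    rw [Finset.sum_congr rfl hterm, ← Finset.mul_sum, h0]
    have hg := geom_sum_mul ((p : ℤ)) v'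
    calc ((p : ℤ) - 1) * (p : ℤ) ^ (w + 1) * (∑ t ∈ Finset.range v', (p : ℤ) ^ t)
          + (p : ℤ) * (p : ℤ) ^ (w + 0)
        = (p : ℤ) ^ (w + 1) * ((∑ t ∈ Finset.range v', (p : ℤ) ^ t) * ((p : ℤ) - 1))
          + (p : ℤ) ^ (w + 1) := by ring
      _ = (p : ℤ) ^ (w + 1) * ((p : ℤ) ^ v' - 1) + (p : ℤ) ^ (w + 1) := by rw [hg]
      _ = (p : ℤ) ^ (w + 1) * (p : ℤ) ^ v' := by ring
      _ = (p : ℤ) ^ f := by rw [← pow_add]; congr 1; omega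
  set A : ℤ := ∑ u ∈ Finset.range w, a (i - m - u) * (p : ℤ) ^ u with hA
  have heq' : xi i = (p : ℤ) ^ m * (A + 1) := by
    rw [heq, e2, e3]; ring
  -- size bound on `xi i`
  have hGrefl : (∑ jx ∈ Finset.range f, (p : ℤ) ^ (f - 1 - jx))
      = ∑ u ∈ Finset.range f, (p : ℤ) ^ u :=
    Finset.sum_range_reflect (fun u => (p : ℤ) ^ u) f
  have hxile : xi i ≤ (p : ℤ) * (∑ u ∈ Finset.range f, (p : ℤ) ^ u)
      + (p : ℤ) * ((p : ℤ) ^ f - 1) := by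
    rw [hxi]
    have h1f : (1 : ℤ) ≤ (p : ℤ) ^ f := one_le_pow₀ (by linarith)
    have hsum : (∑ jx ∈ Finset.range f,
        (if (i + jx + 1 : ℤ) ∈ J then (1 : ℤ) else -1) * r (i + jx + 1) * (p : ℤ) ^ (f - 1 - jx))
        ≤ ∑ jx ∈ Finset.range f, (p : ℤ) * (p : ℤ) ^ (f - 1 - jx) := by
      apply Finset.sum_le_sum
      intro jx _
      have hpow : (0 : ℤ) ≤ (p : ℤ) ^ (f - 1 - jx) := by positivity
      have her : (if (i + jx + 1 : ℤ) ∈ J then (1 : ℤ) else -1) * r (i + jx + 1) ≤ (p : ℤ) := by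
        split_ifs with h
        · simpa using hr_ub (i + jx + 1)
        · have := hr_lb (i + jx + 1); linarith
      exact mul_le_mul_of_nonneg_right her hpow
    have hite : (if i ∈ J then r i * ((p : ℤ) ^ f - 1) else 0) ≤ (p : ℤ) * ((p : ℤ) ^ f - 1) := by
      rw [if_pos hi]
      exact mul_le_mul_of_nonneg_right (hr_ub i) (by linarith)
    calc (∑ jx ∈ Finset.range f,
        (if (i + jx + 1 : ℤ) ∈ J then (1 : ℤ) else -1) * r (i + jx + 1) * (p : ℤ) ^ (f - 1 - jx))
          + (if i ∈ J then r i * ((p : ℤ) ^ f - 1) else 0)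
        ≤ (∑ jx ∈ Finset.range f, (p : ℤ) * (p : ℤ) ^ (f - 1 - jx))
          + (p : ℤ) * ((p : ℤ) ^ f - 1) := add_le_add hsum hite
      _ = (p : ℤ) * (∑ jx ∈ Finset.range f, (p : ℤ) ^ (f - 1 - jx))
          + (p : ℤ) * ((p : ℤ) ^ f - 1) := by rw [Finset.mul_sum]
      _ = (p : ℤ) * (∑ u ∈ Finset.range f, (p : ℤ) ^ u)
          + (p : ℤ) * ((p : ℤ) ^ f - 1) := by rw [hGrefl]
  -- lower bound on `A`
  have hAlb : (∑ u ∈ Finset.range w, (p : ℤ) ^ u) ≤ A := by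
    rw [hA]
    apply Finset.sum_le_sum
    intro u _
    exact le_mul_of_one_le_left (by positivity) (ha_lb _)
  -- final contradiction
  have hGf := geom_sum_mul ((p : ℤ)) f
  have hGw := geom_sum_mul ((p : ℤ)) w
  have h0 : (0 : ℤ) ≤ (p : ℤ) - 1 := by linarith
  have c1 : xi i * ((p : ℤ) - 1) ≤ (p : ℤ) ^ 2 * (p : ℤ) ^ f - (p : ℤ) ^ 2 := by
    have h1 := mul_le_mul_of_nonneg_right hxile h0
    calc xi i * ((p : ℤ) - 1)
        ≤ ((p : ℤ) * (∑ u ∈ Finset.range f, (p : ℤ) ^ u)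
            + (p : ℤ) * ((p : ℤ) ^ f - 1)) * ((p : ℤ) - 1) := h1
      _ = (p : ℤ) * ((∑ u ∈ Finset.range f, (p : ℤ) ^ u) * ((p : ℤ) - 1))
            + (p : ℤ) * ((p : ℤ) ^ f - 1) * ((p : ℤ) - 1) := by ring
      _ = (p : ℤ) * ((p : ℤ) ^ f - 1) + (p : ℤ) * ((p : ℤ) ^ f - 1) * ((p : ℤ) - 1) := by
            rw [hGf]
      _ = (p : ℤ) ^ 2 * (p : ℤ) ^ f - (p : ℤ) ^ 2 := by ring
  have c2 : (p : ℤ) ^ 2 * (p : ℤ) ^ f ≤ (p : ℤ) ^ m * (p : ℤ) ^ w := by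
    rw [← pow_add, ← pow_add]
    exact pow_le_pow_right₀ (by linarith) (by omega)
  have c3 : (p : ℤ) ^ m * (p : ℤ) ^ w + ((p : ℤ) - 2) * (p : ℤ) ^ m ≤ xi i * ((p : ℤ) - 1) := by
    have hApm : (p : ℤ) ^ w - 1 ≤ A * ((p : ℤ) - 1) := by
      calc (p : ℤ) ^ w - 1 = (∑ u ∈ Finset.range w, (p : ℤ) ^ u) * ((p : ℤ) - 1) := hGw.symm
        _ ≤ A * ((p : ℤ) - 1) := mul_le_mul_of_nonneg_right hAlb h0
    have hpm : (0 : ℤ) ≤ (p : ℤ) ^ m := by positivity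
    calc (p : ℤ) ^ m * (p : ℤ) ^ w + ((p : ℤ) - 2) * (p : ℤ) ^ m
        = (p : ℤ) ^ m * (((p : ℤ) ^ w - 1) + ((p : ℤ) - 1)) := by ring
      _ ≤ (p : ℤ) ^ m * (A * ((p : ℤ) - 1) + ((p : ℤ) - 1)) := by
            apply mul_le_mul_of_nonneg_left _ hpm
            linarith
      _ = ((p : ℤ) ^ m * (A + 1)) * ((p : ℤ) - 1) := by ring
      _ = xi i * ((p : ℤ) - 1) := by rw [← heq']
  have hp2pos : (0 : ℤ) < (p : ℤ) ^ 2 := by positivity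
  have hlast : (0 : ℤ) ≤ ((p : ℤ) - 2) * (p : ℤ) ^ m :=
    mul_nonneg (by linarith) (by positivity)
  linarith
end
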